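/- arXiv:2102.08364 — 8 statements merged into one kernel-verified Lean document; each statement's English description precedes it below -/
import Mathlib

section
/- Let G be a graph on vertex set [n] whose maximal clique has size k. Let f = (f_1,...,f_n) be a vector with nonnegative entries summing to s. Then the sum of f_i * f_j over edges {i,j} of G is at most ((k-1)/(2k)) * s^2. -/
open Finset

namespace MSaux

variable {n : ℕ} (G : SimpleGraph (Fin n)) [DecidableRel G.Adj]

/-- adjacency indicator -/
noncomputable def A (p q : Fin n) : ℝ := if G.Adj p q then 1 else 0

noncomputable def B (f g : Fin n → ℝ) : ℝ := ∑ p, ∑ q, A G p q * f p * g q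

noncomputable def W (f : Fin n → ℝ) (x : Fin n) : ℝ := ∑ y, A G x y * f y

lemma A_symm (p q : Fin n) : A G p q = A G q p := by
  simp [A, SimpleGraph.adj_comm]

lemma A_self (p : Fin n) : A G p p = 0 := by simp [A]

lemma B_comm (f g : Fin n → ℝ) : B G f g = B G g f := by
  unfold B
  rw [Finset.sum_comm]
  refine Finset.sum_congr rfl fun p _ => Finset.sum_congr rfl fun q _ => ?_
  rw [A_symm]; ring

lemma B_add_right (f g h : Fin n → ℝ) :
    B G f (fun x => g x + h x) = B G f g + B G f h := by
  unfold B
  rw [← Finset.sum_add_distrib]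
  refine Finset.sum_congr rfl fun p _ => ?_
  rw [← Finset.sum_add_distrib]
  exact Finset.sum_congr rfl fun q _ => by ring

lemma B_sub_right (f g h : Fin n → ℝ) :
    B G f (fun x => g x - h x) = B G f g - B G f h := by
  unfold B
  rw [← Finset.sum_sub_distrib]
  refine Finset.sum_congr rfl fun p _ => ?_
  rw [← Finset.sum_sub_distrib]
  exact Finset.sum_congr rfl fun q _ => by ring

lemma B_add_left (f g h : Fin n → ℝ) :
    B G (fun x => f x + g x) h = B G f h + B G g h := by
  rw [B_comm, B_add_right, B_comm G h f, B_comm G h g]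

lemma B_ite_right (f : Fin n → ℝ) (v : Fin n) (c : ℝ) :
    B G f (fun x => if x = v then c else 0) = c * W G f v := by
  unfold B W
  simp only [mul_ite, mul_zero, Finset.sum_ite_eq', Finset.mem_univ, if_true]
  rw [Finset.mul_sum]
  refine Finset.sum_congr rfl fun p _ => ?_
  rw [A_symm]; ring

lemma W_eval (u v x : Fin n) (c : ℝ) :
    W G (fun y => (if y = v then c else 0) - (if y = u then c else 0)) x
      = A G x v * c - A G x u * c := by
  unfold W
  simp only [mul_sub, mul_ite, mul_zero, Finset.sum_sub_distrib,
    Finset.sum_ite_eq', Finset.mem_univ, if_true]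

lemma shift_eq (f : Fin n → ℝ) (u v : Fin n) (hne : u ≠ v) (hadj : ¬ G.Adj u v) :
    B G (fun x => f x + ((if x = v then f u else 0) - (if x = u then f u else 0)))
        (fun x => f x + ((if x = v then f u else 0) - (if x = u then f u else 0)))
      = B G f f + 2 * f u * (W G f v - W G f u) := by
  have hAuv : A G u v = 0 := by simp [A, hadj]
  have hAvu : A G v u = 0 := by rw [A_symm]; exact hAuv
  have hWv : W G (fun x => (if x = v then f u else 0) - (if x = u then f u else 0)) v = 0 := by
    rw [W_eval, A_self, hAvu]; ring
  have hWu : W G (fun x => (if x = v then f u else 0) - (if x = u then f u else 0)) u = 0 := by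
    rw [W_eval, hAuv, A_self]; ring
  have hBsub : ∀ g : Fin n → ℝ,
      B G g (fun x => (if x = v then f u else 0) - (if x = u then f u else 0))
        = f u * W G g v - f u * W G g u := by
    intro g
    rw [B_sub_right G g (fun x => if x = v then f u else 0)
        (fun x => if x = u then f u else 0),
      B_ite_right, B_ite_right]
  have h2 : B G (fun x => (if x = v then f u else 0) - (if x = u then f u else 0))
      (fun x => (if x = v then f u else 0) - (if x = u then f u else 0)) = 0 := by
    rw [hBsub, hWv, hWu]; ring
  have h1 := hBsub f
  have h1' : B G (fun x => (if x = v then f u else 0) - (if x = u then f u else 0)) f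
      = f u * W G f v - f u * W G f u := by rw [B_comm]; exact h1
  rw [B_add_left G f (fun x => (if x = v then f u else 0) - (if x = u then f u else 0))
      (fun x => f x + ((if x = v then f u else 0) - (if x = u then f u else 0))),
    B_add_right G f f (fun x => (if x = v then f u else 0) - (if x = u then f u else 0)),
    B_add_right G (fun x => (if x = v then f u else 0) - (if x = u then f u else 0)) f
      (fun x => (if x = v then f u else 0) - (if x = u then f u else 0)),
    h1, h1', h2]
  ring

lemma B_clique (f : Fin n → ℝ)
    (hcl : ∀ p, f p ≠ 0 → ∀ q, f q ≠ 0 → p ≠ q → G.Adj p q) :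
    B G f f = (∑ i, f i) ^ 2 - ∑ i, f i ^ 2 := by
  have key : ∀ p q : Fin n,
      A G p q * f p * f q = f p * f q - (if p = q then f p * f q else 0) := by
    intro p q
    by_cases hpq : p = q
    · subst hpq; rw [A_self, if_pos rfl]; ring
    · rw [if_neg hpq]
      by_cases h1 : f p = 0
      · simp [h1]
      by_cases h2 : f q = 0
      · simp [h2]
      have := hcl p h1 q h2 hpq
      simp [A, this]
  unfold B
  calc ∑ p, ∑ q, A G p q * f p * f q
      = ∑ p, ∑ q, (f p * f q - (if p = q then f p * f q else 0)) := by
        exact Finset.sum_congr rfl fun p _ => Finset.sum_congr rfl fun q _ => key p q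
    _ = (∑ p, ∑ q, f p * f q) - ∑ p, ∑ q, (if p = q then f p * f q else 0) := by
        rw [← Finset.sum_sub_distrib]
        exact Finset.sum_congr rfl fun p _ => by rw [← Finset.sum_sub_distrib]
    _ = (∑ i, f i) ^ 2 - ∑ i, f i ^ 2 := by
        congr 1
        · rw [sq, Finset.sum_mul_sum]
        · refine Finset.sum_congr rfl fun p _ => ?_
          rw [Finset.sum_ite_eq, if_pos (Finset.mem_univ p), sq]

lemma main_aux (k : ℕ) (hk : 0 < k)
    (hmax : ∀ s : Finset (Fin n), G.IsClique (s : Set (Fin n)) → s.card ≤ k) :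
    ∀ N (f : Fin n → ℝ), (∀ i, 0 ≤ f i) →
      (Finset.univ.filter fun i => f i ≠ 0).card ≤ N →
      B G f f ≤ (1 - 1 / (k : ℝ)) * (∑ i, f i) ^ 2 := by
  intro N
  induction N with
  | zero =>
      intro f hf hcard
      have hT : (Finset.univ.filter fun i => f i ≠ 0) = ∅ :=
        Finset.card_eq_zero.mp (Nat.le_zero.mp hcard)
      have hz : ∀ i, f i = 0 := by
        intro i
        by_contra h
        have : i ∈ (Finset.univ.filter fun i => f i ≠ 0) := by simp [h]
        rw [hT] at this; exact absurd this (Finset.notMem_empty i)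
      simp [B, hz]
  | succ N ih =>
      intro f hf hcard
      set T := Finset.univ.filter fun i => f i ≠ 0 with hTdef
      by_cases hcl : ∀ p ∈ T, ∀ q ∈ T, p ≠ q → G.Adj p q
      · -- support is a clique
        have hclique : G.IsClique (T : Set (Fin n)) := by
          intro p hp q hq hpq
          exact hcl p (by simpa using hp) q (by simpa using hq) hpq
        have hcardk : T.card ≤ k := hmax T hclique
        have hBeq : B G f f = (∑ i, f i) ^ 2 - ∑ i, f i ^ 2 := by
          refine B_clique G f fun p hp q hq hpq => ?_
          exact hcl p (by simp [hTdef, hp]) q (by simp [hTdef, hq]) hpq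
        have hsumT : ∑ i ∈ T, f i = ∑ i, f i := Finset.sum_filter_ne_zero _
        have hcs : (∑ i, f i) ^ 2 ≤ (k : ℝ) * ∑ i, f i ^ 2 := by
          have h2 : (∑ i ∈ T, f i) ^ 2 ≤ (T.card : ℝ) * ∑ i ∈ T, f i ^ 2 :=
            sq_sum_le_card_mul_sum_sq
          have h3 : ∑ i ∈ T, f i ^ 2 ≤ ∑ i, f i ^ 2 := by
            refine Finset.sum_le_sum_of_subset_of_nonneg (Finset.filter_subset _ _)
              fun i _ _ => by positivity
          have h4 : (T.card : ℝ) ≤ (k : ℝ) := by exact_mod_cast hcardk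
          have h5 : (0 : ℝ) ≤ ∑ i ∈ T, f i ^ 2 := by positivity
          calc (∑ i, f i) ^ 2 = (∑ i ∈ T, f i) ^ 2 := by rw [hsumT]
            _ ≤ (T.card : ℝ) * ∑ i ∈ T, f i ^ 2 := h2
            _ ≤ (k : ℝ) * ∑ i ∈ T, f i ^ 2 := by
                exact mul_le_mul_of_nonneg_right h4 h5
            _ ≤ (k : ℝ) * ∑ i, f i ^ 2 := by
                refine mul_le_mul_of_nonneg_left h3 (by positivity)
        have hk' : (0 : ℝ) < (k : ℝ) := by exact_mod_cast hk
        have hdiv : (∑ i, f i) ^ 2 / (k : ℝ) ≤ ∑ i, f i ^ 2 :=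
          (div_le_iff₀ hk').mpr (by linarith [hcs])
        have hring : (1 - 1 / (k : ℝ)) * (∑ i, f i) ^ 2
            = (∑ i, f i) ^ 2 - (∑ i, f i) ^ 2 / (k : ℝ) := by ring
        rw [hBeq, hring]
        linarith
      · push_neg at hcl
        have key : ∀ a b : Fin n, a ∈ T → b ∈ T → a ≠ b → ¬ G.Adj a b →
            W G f a ≤ W G f b → B G f f ≤ (1 - 1 / (k : ℝ)) * (∑ i, f i) ^ 2 := by
          intro a b ha hb hab hnadj hW
          set g : Fin n → ℝ :=
            fun x => f x + ((if x = b then f a else 0) - (if x = a then f a else 0))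
            with hg
          have hg0 : ∀ i, 0 ≤ g i := by
            intro i
            by_cases h1 : i = a
            · subst h1
              have hga : g i = 0 := by simp [hg, hab]
              simp [hga]
            · by_cases h2 : i = b
              · subst h2
                have hgb : g i = f i + f a := by simp [hg, h1]
                rw [hgb]; exact add_nonneg (hf i) (hf a)
              · have hgi : g i = f i := by simp [hg, h1, h2]
                rw [hgi]; exact hf i
          have hgsum : ∑ i, g i = ∑ i, f i := by
            simp only [hg, Finset.sum_add_distrib, Finset.sum_sub_distrib,
              Finset.sum_ite_eq', Finset.mem_univ, if_true]
            ring
          have hBg := shift_eq G f a b hab hnadj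
          rw [← hg] at hBg
          have hsupp : (Finset.univ.filter fun i => g i ≠ 0) ⊆ T.erase a := by
            intro x hx
            simp only [Finset.mem_filter, Finset.mem_univ, true_and] at hx
            rw [Finset.mem_erase]
            by_cases h1 : x = a
            · exfalso; apply hx; subst h1
              simp [hg, hab]
            · refine ⟨h1, ?_⟩
              by_cases h2 : x = b
              · subst h2; exact hb
              · have hgx : g x = f x := by simp [hg, h1, h2]
                rw [hgx] at hx
                simp [hTdef, hx]
          have hucard : 0 < T.card := Finset.card_pos.mpr ⟨a, ha⟩
          have hcard' : (Finset.univ.filter fun i => g i ≠ 0).card ≤ N := by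
            have h6 := Finset.card_le_card hsupp
            have h7 : (T.erase a).card = T.card - 1 := Finset.card_erase_of_mem ha
            omega
          have hih := ih g hg0 hcard'
          rw [hgsum] at hih
          have hpos : 0 ≤ 2 * f a * (W G f b - W G f a) := by
            have := hf a
            have h8 : 0 ≤ W G f b - W G f a := by linarith
            positivity
          linarith
        obtain ⟨u, hu, v, hv, hne, hadj⟩ := hcl
        rcases le_total (W G f u) (W G f v) with hW | hW
        · exact key u v hu hv hne hadj hW
        · exact key v u hv hu hne.symm (fun h => hadj h.symm) hW

end MSaux

/-- **Motzkin–Straus inequality.** If `G` is a graph on `[n]` whose maximal clique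
has size `k`, and `f` is a nonnegative vector with coordinates summing to `s`,
then the sum of `f i * f j` over edges `{i,j}` of `G` is at most `((k-1)/(2k)) s²`. -/
theorem motzkin_straus (n k : ℕ) (G : SimpleGraph (Fin n)) [DecidableRel G.Adj]
    (hclique : ∃ s : Finset (Fin n), G.IsNClique k s)
    (hmax : ∀ s : Finset (Fin n), G.IsClique (s : Set (Fin n)) → s.card ≤ k)
    (f : Fin n → ℝ) (s : ℝ) (hf : ∀ i, 0 ≤ f i) (hsum : ∑ i, f i = s) :
    (∑ i, ∑ j, if G.Adj i j then f i * f j else 0) / 2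
      ≤ ((k : ℝ) - 1) / (2 * k) * s ^ 2 := by
  rcases Nat.eq_zero_or_pos k with hk0 | hk
  · -- k = 0 forces n = 0
    subst hk0
    have hn : IsEmpty (Fin n) := by
      by_contra h
      rw [not_isEmpty_iff] at h
      obtain ⟨i⟩ := h
      have h1 : G.IsClique (({i} : Finset (Fin n)) : Set (Fin n)) := by
        simp [SimpleGraph.isClique_iff, Set.pairwise_singleton]
      have := hmax {i} h1
      simp at this
    have huniv : (Finset.univ : Finset (Fin n)) = ∅ := Finset.univ_eq_empty
    rw [huniv] at hsum ⊢
    simp at hsum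
    simp [← hsum]
  · have hkR : (0 : ℝ) < (k : ℝ) := by exact_mod_cast hk
    have hmain := MSaux.main_aux G k hk hmax n f hf
      ((Finset.card_filter_le _ _).trans (by simp))
    have hE : (∑ i, ∑ j, if G.Adj i j then f i * f j else 0) = MSaux.B G f f := by
      unfold MSaux.B MSaux.A
      refine Finset.sum_congr rfl fun i _ => Finset.sum_congr rfl fun j _ => ?_
      by_cases h : G.Adj i j <;> simp [h]
    rw [hsum] at hmain
    have hkne : (k : ℝ) ≠ 0 := ne_of_gt hkR
    have heq : ((k : ℝ) - 1) / (2 * k) * s ^ 2 = (1 - 1 / (k : ℝ)) * s ^ 2 / 2 := by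
      rw [eq_div_iff (by norm_num : (2:ℝ) ≠ 0), div_mul_eq_mul_div, div_mul_eq_mul_div,
        div_eq_iff (by positivity : (2*(k:ℝ)) ≠ 0)]
      field_simp
    rw [hE, heq]
    linarith
end

section
/- Let G be a graph on [n] with maximal clique size k, and let A be any symmetric real matrix supported on the edges of G (i.e., A_{ij} = 0 whenever {i,j} is not an edge, and A_{ii} = 0). Then the largest eigenvalue λ_1(A) satisfies λ_1(A)^2 <= ((k-1)/k) * ||A||_F^2, where ||A||_F is the Frobenius norm. -/
open Finset Matrix



lemma ms_shift {n : ℕ} (B : Matrix (Fin n) (Fin n) ℝ)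
    (hsym : ∀ a b, B a b = B b a) {i j : Fin n} (hij : i ≠ j)
    (hBii : B i i = 0) (hBjj : B j j = 0) (hBij : B i j = 0)
    (y : Fin n → ℝ) (t : ℝ) :
    (y + t • (Pi.single i 1 - Pi.single j 1)) ⬝ᵥ B *ᵥ (y + t • (Pi.single i 1 - Pi.single j 1))
      = y ⬝ᵥ B *ᵥ y + 2 * t * ((B *ᵥ y) i - (B *ᵥ y) j) := by
  set d : Fin n → ℝ := Pi.single i 1 - Pi.single j 1 with hd
  have hBd : B *ᵥ d = fun m => B m i - B m j := by
    funext m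
    simp [hd, Matrix.mulVec_sub, Matrix.mulVec_single]
  have hyBd : y ⬝ᵥ (B *ᵥ d) = (B *ᵥ y) i - (B *ᵥ y) j := by
    rw [hBd]
    simp only [dotProduct, Matrix.mulVec, mul_sub, Finset.sum_sub_distrib]
    congr 1 <;> (apply Finset.sum_congr rfl; intro m _; rw [hsym]; ring)
  have hdBy : d ⬝ᵥ (B *ᵥ y) = (B *ᵥ y) i - (B *ᵥ y) j := by
    simp [hd, sub_dotProduct, single_dotProduct]
  have hdBd : d ⬝ᵥ (B *ᵥ d) = 0 := by
    rw [hBd]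
    have hBji : B j i = 0 := by rw [hsym]; exact hBij
    simp [hd, sub_dotProduct, single_dotProduct, hBii, hBjj, hBij, hBji]
  rw [Matrix.mulVec_add, Matrix.mulVec_smul, dotProduct_add, add_dotProduct,
    add_dotProduct, dotProduct_smul, smul_dotProduct,
    dotProduct_smul, smul_dotProduct, hyBd, hdBy, hdBd, smul_eq_mul,
    smul_eq_mul, smul_eq_mul]
  ring



lemma ms_aux {n k : ℕ} (G : SimpleGraph (Fin n))
    (hmax : ∀ s : Finset (Fin n), G.IsClique (s : Set (Fin n)) → s.card ≤ k)
    (B : Matrix (Fin n) (Fin n) ℝ)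
    (hsym : ∀ a b, B a b = B b a)
    (hB0 : ∀ a b, ¬ G.Adj a b → B a b = 0)
    (hB1 : ∀ a b, B a b ≤ 1) (hBnn : ∀ a b, 0 ≤ B a b) :
    ∀ (m : ℕ) (y : Fin n → ℝ), (∀ i, 0 ≤ y i) → ∑ i, y i = 1 →
      ({i | y i ≠ 0} : Finset (Fin n)).card ≤ m → y ⬝ᵥ B *ᵥ y ≤ 1 - 1 / (k : ℝ) := by
  intro m
  induction m with
  | zero =>
    intro y hy hsum hcard
    exfalso
    have hz : ∀ i, y i = 0 := by
      intro i
      by_contra h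
      have : i ∈ ({i | y i ≠ 0} : Finset (Fin n)) := by simpa using h
      have := Finset.card_pos.mpr ⟨i, this⟩
      omega
    rw [Finset.sum_eq_zero (fun i _ => hz i)] at hsum
    norm_num at hsum
  | succ m ih =>
    intro y hy hsum hcard
    set S : Finset (Fin n) := {i | y i ≠ 0} with hS
    have hsumS : ∑ i ∈ S, y i = 1 := by
      rw [← hsum]
      apply Finset.sum_subset (Finset.subset_univ S)
      intro i _ hi
      by_contra h
      exact hi (by simpa [hS] using h)
    have hSne : S.Nonempty := by
      by_contra h
      rw [Finset.not_nonempty_iff_eq_empty] at h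
      rw [h] at hsumS
      norm_num at hsumS
    by_cases hcl : G.IsClique (S : Set (Fin n))
    · -- clique case
      have hSk : S.card ≤ k := hmax S hcl
      have hScard : 0 < S.card := Finset.card_pos.mpr hSne
      -- Cauchy-Schwarz : 1 ≤ |S| * ∑_{i ∈ S} y i ^ 2
      have hCS : 1 ≤ (S.card : ℝ) * ∑ i ∈ S, y i ^ 2 := by
        have := Finset.sum_mul_sq_le_sq_mul_sq S (fun _ => (1 : ℝ)) y
        simp only [one_mul, one_pow] at this
        rw [hsumS] at this
        simpa using this
      have hys : (1 : ℝ) / k ≤ ∑ i, y i ^ 2 := by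
        have hk0 : 0 < k := lt_of_lt_of_le hScard hSk
        have h1 : (1 : ℝ) / k ≤ 1 / S.card := by
          apply one_div_le_one_div_of_le
          · exact_mod_cast hScard
          · exact_mod_cast hSk
        have h2 : (1 : ℝ) / S.card ≤ ∑ i ∈ S, y i ^ 2 := by
          rw [div_le_iff₀ (by exact_mod_cast hScard)]
          linarith [hCS]
        have h3 : ∑ i ∈ S, y i ^ 2 ≤ ∑ i, y i ^ 2 :=
          Finset.sum_le_sum_of_subset_of_nonneg (Finset.subset_univ S)
            (fun i _ _ => sq_nonneg _)
        linarith
      -- bound the quadratic form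
      have hform : y ⬝ᵥ B *ᵥ y ≤ 1 - ∑ i, y i ^ 2 := by
        have hexp : y ⬝ᵥ B *ᵥ y = ∑ a, ∑ b, y a * (B a b * y b) := by
          simp [dotProduct, Matrix.mulVec, Finset.mul_sum]
        have hbound : ∀ a b : Fin n, y a * (B a b * y b) ≤
            (if a = b then 0 else y a * y b) := by
          intro a b
          by_cases hab : a = b
          · subst hab
            have : B a a = 0 := hB0 a a (G.irrefl)
            simp [this]
          · simp only [if_neg hab]
            exact mul_le_mul_of_nonneg_left (mul_le_of_le_one_left (hy b) (hB1 a b)) (hy a)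
        have hsq : ∑ a, ∑ b, (if a = b then (0:ℝ) else y a * y b)
            = 1 - ∑ i, y i ^ 2 := by
          have : ∀ a : Fin n, ∑ b, (if a = b then (0:ℝ) else y a * y b)
              = (∑ b, y a * y b) - y a * y a := by
            intro a
            have : ∀ b : Fin n, (if a = b then (0:ℝ) else y a * y b)
                = y a * y b - (if a = b then y a * y b else 0) := by
              intro b; by_cases h : a = b <;> simp [h]
            rw [Finset.sum_congr rfl (fun b _ => this b), Finset.sum_sub_distrib,
              Finset.sum_ite_eq, if_pos (Finset.mem_univ a)]
          rw [Finset.sum_congr rfl (fun a _ => this a), Finset.sum_sub_distrib,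
            ← Finset.sum_mul_sum, hsum]
          simp [sq]
        calc y ⬝ᵥ B *ᵥ y = ∑ a, ∑ b, y a * (B a b * y b) := hexp
          _ ≤ ∑ a, ∑ b, (if a = b then (0:ℝ) else y a * y b) := by
              apply Finset.sum_le_sum; intro a _
              apply Finset.sum_le_sum; intro b _
              exact hbound a b
          _ = 1 - ∑ i, y i ^ 2 := hsq
      linarith
    · -- non-clique case
      have key : ∀ i j : Fin n, i ∈ S → j ∈ S → i ≠ j → ¬ G.Adj i j →
          (B *ᵥ y) j ≤ (B *ᵥ y) i → y ⬝ᵥ B *ᵥ y ≤ 1 - 1 / (k : ℝ) := by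
        intro i j hiS hjS hij hnadj hc
        set t : ℝ := y j with ht
        set y' : Fin n → ℝ := y + t • (Pi.single i 1 - Pi.single j 1) with hy'
        have hvi : y' i = y i + y j := by
          simp [hy', Pi.single_apply, hij.symm, ht]
        have hvj : y' j = 0 := by
          simp [hy', Pi.single_apply, hij, Ne.symm hij, ht]
        have hvm : ∀ l : Fin n, l ≠ i → l ≠ j → y' l = y l := by
          intro l hli hlj
          simp [hy', Pi.single_apply, hli, hlj]
        have hy'nn : ∀ l, 0 ≤ y' l := by
          intro l
          by_cases hli : l = i
          · subst hli; rw [hvi]; exact add_nonneg (hy l) (hy j)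
          · by_cases hlj : l = j
            · subst hlj; rw [hvj]
            · rw [hvm l hli hlj]; exact hy l
        have hy'sum : ∑ l, y' l = 1 := by
          simp [hy', Pi.single_apply, mul_sub, Finset.sum_add_distrib,
            Finset.sum_sub_distrib, mul_ite, Finset.sum_ite_eq', hsum]
        have hsubset : ({l | y' l ≠ 0} : Finset (Fin n)) ⊆ S.erase j := by
          intro l hl
          have hl' : y' l ≠ 0 := by simpa using hl
          have hlj : l ≠ j := by
            intro h; subst h; exact hl' hvj
          rw [Finset.mem_erase]
          refine ⟨hlj, ?_⟩
          by_cases hli : l = i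
          · subst hli; exact hiS
          · rw [hS, Finset.mem_filter]
            exact ⟨Finset.mem_univ l, by rwa [← hvm l hli hlj]⟩
        have hcard' : ({l | y' l ≠ 0} : Finset (Fin n)).card ≤ m := by
          have h1 := Finset.card_le_card hsubset
          have h2 : (S.erase j).card = S.card - 1 := Finset.card_erase_of_mem hjS
          have h3 : 0 < S.card := Finset.card_pos.mpr ⟨j, hjS⟩
          omega
        have hIH := ih y' hy'nn hy'sum hcard'
        have hBii : B i i = 0 := hB0 i i G.irrefl
        have hBjj : B j j = 0 := hB0 j j G.irrefl
        have hBij : B i j = 0 := hB0 i j hnadj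
        have hshift := ms_shift B hsym hij hBii hBjj hBij y t
        rw [← hy'] at hshift
        have ht0 : 0 ≤ t := hy j
        nlinarith [hIH, hshift]
      rw [SimpleGraph.isClique_iff, Set.Pairwise] at hcl
      push_neg at hcl
      obtain ⟨i, hi, j, hj, hij, hnadj⟩ := hcl
      simp only [Finset.coe_mem, Finset.mem_coe] at hi hj
      rcases le_total ((B *ᵥ y) j) ((B *ᵥ y) i) with h | h
      · exact key i j hi hj hij hnadj h
      · exact key j i hj hi hij.symm (fun hadj => hnadj (hadj.symm)) h

/-- If `G` is a graph on `[n]` whose maximal clique has size `k` and `A` is a real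
symmetric matrix supported on the edges of `G` (with zero diagonal), then the largest
eigenvalue of `A` satisfies `λ₁(A)² ≤ ((k-1)/k) ‖A‖_F²`. -/
theorem spectral_bound_clique (n k : ℕ) (hn : 0 < n) (G : SimpleGraph (Fin n))
    (hclique : ∃ s : Finset (Fin n), G.IsNClique k s)
    (hmax : ∀ s : Finset (Fin n), G.IsClique (s : Set (Fin n)) → s.card ≤ k)
    (A : Matrix (Fin n) (Fin n) ℝ) (hA : A.IsHermitian)
    (hsupp : ∀ i j, ¬ G.Adj i j → A i j = 0) :
    (⨆ i, hA.eigenvalues i) ^ 2 ≤ ((k : ℝ) - 1) / k * ∑ i, ∑ j, (A i j) ^ 2 := by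
  classical
  have hnonempty : Nonempty (Fin n) := Fin.pos_iff_nonempty.mp hn
  have hk1 : 1 ≤ k := by
    obtain ⟨x⟩ := hnonempty
    have := hmax {x} (by simp [SimpleGraph.isClique_iff, Set.Pairwise])
    simpa using this
  have hk0 : (0:ℝ) < k := by exact_mod_cast hk1
  obtain ⟨i₀, hi₀⟩ := exists_eq_ciSup_of_finite (f := hA.eigenvalues)
  rw [← hi₀]
  set v : Fin n → ℝ := ⇑(hA.eigenvectorBasis i₀) with hv
  set lam : ℝ := hA.eigenvalues i₀ with hlam
  have heig : A *ᵥ v = lam • v := hA.mulVec_eigenvectorBasis i₀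
  have hnorm : ∑ i, v i * v i = 1 := by
    have horth := hA.eigenvectorBasis.orthonormal
    rw [orthonormal_iff_ite] at horth
    have h1 := horth i₀ i₀
    simp only [if_pos rfl, PiLp.inner_apply, RCLike.inner_apply, starRingEnd_apply,
      star_trivial] at h1
    exact h1
  have hquad : v ⬝ᵥ (A *ᵥ v) = lam := by
    rw [heig, dotProduct_smul, smul_eq_mul, dotProduct, hnorm, mul_one]
  set P : Finset (Fin n × Fin n) :=
    Finset.univ.filter (fun p : Fin n × Fin n => G.Adj p.1 p.2) with hP
  have hlamsum : lam = ∑ p ∈ P, A p.1 p.2 * (v p.1 * v p.2) := by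
    rw [← hquad]
    have h1 : v ⬝ᵥ (A *ᵥ v)
        = ∑ p ∈ (Finset.univ : Finset (Fin n × Fin n)), A p.1 p.2 * (v p.1 * v p.2) := by
      rw [← Finset.univ_product_univ, Finset.sum_product]
      simp only [dotProduct, Matrix.mulVec, Finset.mul_sum]
      exact Finset.sum_congr rfl fun a _ => Finset.sum_congr rfl fun b _ => by ring
    rw [h1]
    symm
    apply Finset.sum_subset (Finset.filter_subset _ _)
    intro p _ hp
    have : ¬ G.Adj p.1 p.2 := by
      intro h; exact hp (by simp [hP, h])
    rw [hsupp p.1 p.2 this, zero_mul]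
  have hCS := Finset.sum_mul_sq_le_sq_mul_sq P (fun p => A p.1 p.2)
    (fun p => v p.1 * v p.2)
  set B : Matrix (Fin n) (Fin n) ℝ :=
    Matrix.of (fun a b => if G.Adj a b then (1:ℝ) else 0) with hB
  set y : Fin n → ℝ := fun i => v i ^ 2 with hy
  have hms := ms_aux G hmax B
    (fun a b => by simp only [hB, Matrix.of_apply]; rw [G.adj_comm])
    (fun a b h => by simp [hB, h])
    (fun a b => by by_cases h : G.Adj a b <;> simp [hB, h])
    (fun a b => by by_cases h : G.Adj a b <;> simp [hB, h])
    n y (fun i => sq_nonneg _)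
    (by simpa [hy, sq] using hnorm)
    (le_trans (Finset.card_filter_le _ _) (by simp))
  have hY : ∑ p ∈ P, (v p.1 * v p.2) ^ 2 ≤ 1 - 1 / (k:ℝ) := by
    refine le_trans (le_of_eq ?_) hms
    rw [hP, Finset.sum_filter, ← Finset.univ_product_univ, Finset.sum_product]
    simp only [dotProduct, Matrix.mulVec, Finset.mul_sum, hB, Matrix.of_apply,
      ite_mul, one_mul, zero_mul, mul_ite, mul_zero]
    refine Finset.sum_congr rfl fun a _ => Finset.sum_congr rfl fun b _ => ?_
    by_cases h : G.Adj a b <;> simp [h, hy] <;> ring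
  have hA2 : ∑ p ∈ P, (A p.1 p.2) ^ 2 ≤ ∑ i, ∑ j, (A i j) ^ 2 := by
    rw [← Finset.sum_product']
    have hsub : P ⊆ Finset.univ ×ˢ Finset.univ := by
      rw [Finset.univ_product_univ]; exact Finset.filter_subset _ _
    exact Finset.sum_le_sum_of_subset_of_nonneg hsub (fun p _ _ => sq_nonneg _)
  have hF2 : (0:ℝ) ≤ ∑ i, ∑ j, (A i j) ^ 2 :=
    Finset.sum_nonneg fun i _ => Finset.sum_nonneg fun j _ => sq_nonneg _
  have hYnn : (0:ℝ) ≤ ∑ p ∈ P, (v p.1 * v p.2) ^ 2 :=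
    Finset.sum_nonneg fun p _ => sq_nonneg _
  calc lam ^ 2 = (∑ p ∈ P, A p.1 p.2 * (v p.1 * v p.2)) ^ 2 := by rw [hlamsum]
    _ ≤ (∑ p ∈ P, (A p.1 p.2) ^ 2) * ∑ p ∈ P, (v p.1 * v p.2) ^ 2 := hCS
    _ ≤ (∑ i, ∑ j, (A i j) ^ 2) * (1 - 1 / (k:ℝ)) := by
        apply mul_le_mul hA2 hY hYnn hF2
    _ = ((k : ℝ) - 1) / k * ∑ i, ∑ j, (A i j) ^ 2 := by
        field_simp
end

section
/- Let G be a tree on vertex set [n], let s, η > 0, and let v = (v_1,...,v_n) be a vector with 0 <= v_i <= η for all i and \sum_i v_i = s. Then \sum_{i ~ j} v_i v_j (sum over edges of the tree) is at most s^2/4 if s < 2η, and at most η(s - η) if s >= 2η. -/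
open SimpleGraph Finset

private lemma dist_le_of_mem_support {V : Type*} [DecidableEq V] {G : SimpleGraph V} {r x y : V}
    (p : G.Walk r x) (hy : y ∈ p.support) : G.dist r y ≤ p.length :=
  le_trans (SimpleGraph.dist_le (p.takeUntil y hy)) (p.length_takeUntil_le hy)

private lemma concat_isPath {V : Type*} [DecidableEq V] {G : SimpleGraph V} {r i j : V}
    {p : G.Walk r j} (hp : p.IsPath) (h : G.Adj j i) (hi : i ∉ p.support) :
    (p.concat h).IsPath := by
  rw [SimpleGraph.Walk.isPath_def, SimpleGraph.Walk.support_concat,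
    List.nodup_append]
  exact ⟨hp.support_nodup, List.nodup_singleton i, by simpa using fun (a : V) (ha : a ∈ p.support) (h : a = i) => hi (h ▸ ha)⟩

private lemma parent_unique {V : Type*} [DecidableEq V] {G : SimpleGraph V} (hT : G.IsTree) {r i j k : V}
    (hij : G.Adj i j) (hik : G.Adj i k)
    (hj : G.dist r j < G.dist r i) (hk : G.dist r k < G.dist r i) : j = k := by
  obtain ⟨pj, hpj, hlj⟩ := hT.isConnected.exists_path_of_dist r j
  obtain ⟨pk, hpk, hlk⟩ := hT.isConnected.exists_path_of_dist r k
  have hinj : i ∉ pj.support := fun h =>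
    absurd (dist_le_of_mem_support pj h) (by omega)
  have hink : i ∉ pk.support := fun h =>
    absurd (dist_le_of_mem_support pk h) (by omega)
  have h1 : (pj.concat hij.symm).IsPath := concat_isPath hpj hij.symm hinj
  have h2 : (pk.concat hik.symm).IsPath := concat_isPath hpk hik.symm hink
  have hpq := hT.IsAcyclic.path_unique ⟨pj.concat hij.symm, h1⟩ ⟨pk.concat hik.symm, h2⟩
  have hw : pj.concat hij.symm = pk.concat hik.symm := congrArg Subtype.val hpq
  obtain ⟨hv, -⟩ := SimpleGraph.Walk.concat_inj hw
  exact hv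

private lemma dist_ne_of_adj {V : Type*} [DecidableEq V] {G : SimpleGraph V} (hT : G.IsTree) (r : V)
    {i j : V} (hij : G.Adj i j) : G.dist r i ≠ G.dist r j := by
  intro he
  obtain ⟨q, hq, hlq⟩ := hT.isConnected.exists_path_of_dist r j
  by_cases hi : i ∈ q.support
  · have h1 : G.dist r i ≤ (q.takeUntil i hi).length := SimpleGraph.dist_le _
    have h2 : G.dist i j ≤ (q.dropUntil i hi).length := SimpleGraph.dist_le _
    have h3 := congrArg SimpleGraph.Walk.length (q.take_spec hi)
    rw [SimpleGraph.Walk.length_append] at h3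
    have h4 : G.dist i j = 1 := SimpleGraph.dist_eq_one_iff_adj.2 hij
    omega
  · have hpath : (q.concat hij.symm).IsPath := concat_isPath hq hij.symm hi
    obtain ⟨p, hp, hlp⟩ := hT.isConnected.exists_path_of_dist r i
    have hpq := hT.IsAcyclic.path_unique ⟨p, hp⟩ ⟨q.concat hij.symm, hpath⟩
    have hw : p = q.concat hij.symm := congrArg Subtype.val hpq
    have hl : p.length = q.length + 1 := by rw [hw, SimpleGraph.Walk.length_concat]
    omega

private lemma edge_sum_le {n : ℕ} (G : SimpleGraph (Fin n)) [DecidableRel G.Adj]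
    (hT : G.IsTree) (v : Fin n → ℝ) (M : ℝ) (h0 : ∀ i, 0 ≤ v i) (hM : ∀ i, v i ≤ M)
    (r : Fin n) (hr : v r = M) :
    (∑ i, ∑ j, if G.Adj i j then v i * v j else 0) / 2 ≤ M * ((∑ i, v i) - M) := by
  classical
  set d : Fin n → ℕ := fun x => G.dist r x with hd
  have hM0 : 0 ≤ M := hr ▸ h0 r
  -- split each edge term according to which endpoint is closer to the root
  have hsplit : (∑ i, ∑ j, if G.Adj i j then v i * v j else 0)
      = (∑ i, ∑ j, if G.Adj i j ∧ d j < d i then v i * v j else 0)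
        + (∑ i, ∑ j, if G.Adj i j ∧ d i < d j then v i * v j else 0) := by
    rw [← Finset.sum_add_distrib]
    refine Finset.sum_congr rfl fun i _ => ?_
    rw [← Finset.sum_add_distrib]
    refine Finset.sum_congr rfl fun j _ => ?_
    by_cases h : G.Adj i j
    · have hne : d i ≠ d j := dist_ne_of_adj hT r h
      rcases lt_or_gt_of_ne hne with h1 | h1
      · simp [h, h1, not_lt_of_gt h1]
      · simp [h, h1, not_lt_of_gt h1]
    · simp [h]
  have hsym : (∑ i, ∑ j, if G.Adj i j ∧ d i < d j then v i * v j else 0)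
      = (∑ i, ∑ j, if G.Adj i j ∧ d j < d i then v i * v j else 0) := by
    rw [Finset.sum_comm]
    refine Finset.sum_congr rfl fun x _ => Finset.sum_congr rfl fun y _ => ?_
    have hc : (G.Adj y x ∧ d y < d x) = (G.Adj x y ∧ d y < d x) := by
      rw [G.adj_comm]
    exact if_congr (iff_of_eq hc) (mul_comm _ _) rfl
  -- bound the oriented sum
  have hbound : (∑ i, ∑ j, if G.Adj i j ∧ d j < d i then v i * v j else 0)
      ≤ ∑ i, (if i = r then 0 else v i * M) := by
    refine Finset.sum_le_sum fun i _ => ?_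
    by_cases hir : i = r
    · subst hir
      have : ∀ j ∈ Finset.univ, (if G.Adj i j ∧ d j < d i then v i * v j else 0) = 0 := by
        intro j _
        have : ¬ (G.Adj i j ∧ d j < d i) := by
          rintro ⟨-, hlt⟩
          simp only [hd, SimpleGraph.dist_self] at hlt
          omega
        simp [this]
      simp [Finset.sum_congr rfl this]
    · simp only [hir, if_false]
      by_cases hex : ∃ j0, G.Adj i j0 ∧ d j0 < d i
      · obtain ⟨j0, hj0⟩ := hex
        have heq : (∑ j, if G.Adj i j ∧ d j < d i then v i * v j else 0)
            = (if G.Adj i j0 ∧ d j0 < d i then v i * v j0 else 0) := by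
          refine Finset.sum_eq_single j0 (fun b _ hb => ?_) (fun h => absurd (Finset.mem_univ j0) h)
          have : ¬ (G.Adj i b ∧ d b < d i) := by
            rintro ⟨hb1, hb2⟩
            exact hb (parent_unique hT hb1 hj0.1 hb2 hj0.2)
          simp [this]
        rw [heq, if_pos hj0]
        exact mul_le_mul_of_nonneg_left (hM j0) (h0 i)
      · push_neg at hex
        have : ∀ j ∈ Finset.univ, (if G.Adj i j ∧ d j < d i then v i * v j else 0) = 0 := by
          intro j _
          have : ¬ (G.Adj i j ∧ d j < d i) := by
            rintro ⟨h1, h2⟩; exact absurd h2 (not_lt.2 (hex j h1))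
          simp [this]
        rw [Finset.sum_congr rfl this]
        simp
        exact mul_nonneg (h0 i) hM0
    -- end per-i bound
  have hsum2 : (∑ i, (if i = r then 0 else v i * M)) = ((∑ i, v i) - M) * M := by
    have h1 : ∀ i, (if i = r then 0 else v i * M)
        = v i * M - (if i = r then v i * M else 0) := by
      intro i; by_cases h : i = r <;> simp [h]
    rw [Finset.sum_congr rfl (fun i _ => h1 i), Finset.sum_sub_distrib,
      Finset.sum_ite_eq' Finset.univ r (fun i => v i * M), if_pos (Finset.mem_univ r),
      ← Finset.sum_mul, hr]
    ring
  have : (∑ i, ∑ j, if G.Adj i j then v i * v j else 0)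
      ≤ 2 * (((∑ i, v i) - M) * M) := by
    rw [hsplit, hsym]
    have := hsum2 ▸ hbound
    linarith
  linarith

/-- If `G` is a tree on `[n]`, `s, η > 0`, and `v` is a vector with `0 ≤ v i ≤ η`
summing to `s`, then the sum of `v i * v j` over the edges of the tree is at most
`s²/4` when `s < 2η`, and at most `η (s - η)` when `s ≥ 2η`. -/
theorem tree_edge_sum_bound (n : ℕ) (G : SimpleGraph (Fin n)) [DecidableRel G.Adj]
    (hT : G.IsTree) (s η : ℝ) (hs : 0 < s) (hη : 0 < η)
    (v : Fin n → ℝ) (hv : ∀ i, 0 ≤ v i ∧ v i ≤ η) (hsum : ∑ i, v i = s) :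
    (s < 2 * η → (∑ i, ∑ j, if G.Adj i j then v i * v j else 0) / 2 ≤ s ^ 2 / 4) ∧
    (2 * η ≤ s → (∑ i, ∑ j, if G.Adj i j then v i * v j else 0) / 2 ≤ η * (s - η)) := by
  haveI : Nonempty (Fin n) := hT.isConnected.nonempty
  obtain ⟨r, -, hrmax⟩ := Finset.exists_max_image Finset.univ v Finset.univ_nonempty
  have key := edge_sum_le G hT v (v r) (fun i => (hv i).1)
    (fun i => hrmax i (Finset.mem_univ i)) r rfl
  rw [hsum] at key
  have hM0 : 0 ≤ v r := (hv r).1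
  have hMη : v r ≤ η := (hv r).2
  constructor
  · intro _
    nlinarith [sq_nonneg (s - 2 * v r)]
  · intro h2
    nlinarith [mul_nonneg (sub_nonneg.2 hMη) (by linarith : (0:ℝ) ≤ s - η - v r)]
end

section
/- For δ > 0, let x(δ) > 1 be the unique solution of φ_δ'(x) = 0 where φ_δ(x) = x(x-3)/2 + ((1+δ)/2)*x/(x-1). Then ((1+δ)/2)^{1/3} + 1 < x(δ) < ((1+δ)/2)^{1/3} + 3/2. -/
/-- For `δ > 0`, the unique solution `x(δ) > 1` of `φ_δ'(x) = 0`, where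
`φ_δ'(x) = x - 3/2 - ((1+δ)/2)/(x-1)²`, satisfies
`((1+δ)/2)^{1/3} + 1 < x(δ) < ((1+δ)/2)^{1/3} + 3/2`. -/
theorem critical_point_location (δ x : ℝ) (hδ : 0 < δ) (hx : 1 < x)
    (hcrit : x - 3 / 2 - (1 + δ) / 2 * (1 / (x - 1) ^ 2) = 0) :
    ((1 + δ) / 2) ^ ((1 : ℝ) / 3) + 1 < x ∧ x < ((1 + δ) / 2) ^ ((1 : ℝ) / 3) + 3 / 2 := by
  set c : ℝ := (1 + δ) / 2 with hc
  have hcpos : 0 < c := by positivity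
  have ht : 0 < x - 1 := by linarith
  have hne : (x - 1) ^ 2 ≠ 0 := by positivity
  have key : (x - 3 / 2) * (x - 1) ^ 2 = c := by
    field_simp at hcrit
    nlinarith [hcrit]
  have hx32 : 3 / 2 < x := by nlinarith [sq_nonneg (x - 1), sq_nonneg x]
  have hcube : (c ^ ((1:ℝ)/3)) ^ 3 = c := by
    rw [← Real.rpow_natCast (c ^ ((1:ℝ)/3)) 3, ← Real.rpow_mul hcpos.le]
    norm_num
  have hr0 : 0 ≤ c ^ ((1:ℝ)/3) := Real.rpow_nonneg hcpos.le _
  constructor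
  · have h1 : (c ^ ((1:ℝ)/3)) ^ 3 < (x - 1) ^ 3 := by
      rw [hcube]; nlinarith
    have := lt_of_pow_lt_pow_left₀ 3 ht.le h1
    linarith
  · have h1 : (x - 3/2) ^ 3 < (c ^ ((1:ℝ)/3)) ^ 3 := by
      rw [hcube]; nlinarith
    have := lt_of_pow_lt_pow_left₀ 3 hr0 h1
    linarith
end

section
/- For δ > 0, let ψ(δ) = min over integers k >= 2 of φ_δ(k), where φ_δ(k) = k(k-3)/2 + ((1+δ)/2)*k/(k-1). Then there exists an absolute constant C > 0 such that |ψ(δ) - ((1/2)δ + (3/2^{5/3}) δ^{2/3})| <= C * δ^{1/3} for all δ >= 1. -/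
/-- For `δ > 0` and an integer `k ≥ 2`, `φ_δ(k) = k(k-3)/2 + ((1+δ)/2)·k/(k-1)`. -/
noncomputable def phiDelta (δ : ℝ) (k : ℕ) : ℝ :=
  (k : ℝ) * ((k : ℝ) - 3) / 2 + (1 + δ) / 2 * (k : ℝ) / ((k : ℝ) - 1)

set_option maxHeartbeats 1600000 in
/-- With `ψ(δ) = min_{k ≥ 2} φ_δ(k)`, there is an absolute constant `C > 0` such that
`|ψ(δ) - (δ/2 + (3/2^{5/3}) δ^{2/3})| ≤ C δ^{1/3}` for all `δ ≥ 1`. -/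
theorem psi_asymptotics :
    ∃ C : ℝ, 0 < C ∧ ∀ δ : ℝ, 1 ≤ δ →
      |(⨅ k : ℕ, phiDelta δ (k + 2))
          - ((1 / 2) * δ + 3 / (2 : ℝ) ^ ((5 : ℝ) / 3) * δ ^ ((2 : ℝ) / 3))|
        ≤ C * δ ^ ((1 : ℝ) / 3) := by
  refine ⟨2, by norm_num, fun δ hδ => ?_⟩
  have hδ0 : (0:ℝ) < δ := by linarith
  set a := δ ^ ((1:ℝ)/3) with ha_def
  set b := (δ/2) ^ ((1:ℝ)/3) with hb_def
  have ha_pos : 0 < a := Real.rpow_pos_of_pos hδ0 _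
  have hb_pos : 0 < b := Real.rpow_pos_of_pos (by linarith) _
  have ha1 : 1 ≤ a := Real.one_le_rpow hδ (by norm_num)
  have ha3 : a ^ 3 = δ := by
    rw [ha_def, ← Real.rpow_natCast (δ ^ ((1:ℝ)/3)) 3, ← Real.rpow_mul hδ0.le]
    norm_num
  have hb3 : b ^ 3 = δ / 2 := by
    rw [hb_def, ← Real.rpow_natCast ((δ/2) ^ ((1:ℝ)/3)) 3,
      ← Real.rpow_mul (by linarith : (0:ℝ) ≤ δ/2)]
    norm_num
  have hba : b ≤ a := by
    apply Real.rpow_le_rpow (by linarith) (by linarith) (by norm_num)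
  have hT : 3 / (2:ℝ) ^ ((5:ℝ)/3) * δ ^ ((2:ℝ)/3) = 3/2 * b^2 := by
    have h1 : b ^ 2 = (δ/2) ^ ((2:ℝ)/3) := by
      rw [hb_def, ← Real.rpow_natCast ((δ/2) ^ ((1:ℝ)/3)) 2,
        ← Real.rpow_mul (by linarith : (0:ℝ) ≤ δ/2)]
      norm_num
    have h2 : (δ/2) ^ ((2:ℝ)/3) = δ ^ ((2:ℝ)/3) / (2:ℝ) ^ ((2:ℝ)/3) :=
      Real.div_rpow hδ0.le (by norm_num) _
    have h3 : (2:ℝ) ^ ((5:ℝ)/3) = 2 * (2:ℝ) ^ ((2:ℝ)/3) := by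
      rw [show ((5:ℝ)/3) = 1 + (2:ℝ)/3 by norm_num, Real.rpow_add (by norm_num), Real.rpow_one]
    have h4 : (0:ℝ) < (2:ℝ) ^ ((2:ℝ)/3) := Real.rpow_pos_of_pos (by norm_num) _
    rw [h1, h2, h3]
    field_simp
  have h32 : 3 * b^2 ≤ 2 * a^2 := by
    have h6 : a^6 = 4 * b^6 := by
      have e1 : a^6 = (a^3)^2 := by ring
      have e2 : b^6 = (b^3)^2 := by ring
      rw [e1, e2, ha3, hb3]
      ring
    by_contra h
    push_neg at h
    nlinarith [mul_pos (sub_pos.2 h) (show (0:ℝ) < 4*a^4 + 6*a^2*b^2 + 9*b^4 by positivity),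
      pow_pos hb_pos 6]
  have amgm : ∀ m : ℝ, 0 < m → 3/2 * b^2 ≤ m^2/2 + δ/(2*m) := by
    intro m hm
    have h1 : (0:ℝ) ≤ (m - b)^2 * (m + 2*b) := by positivity
    have hδ2 : δ = 2 * b^3 := by rw [hb3]; ring
    have key : (m^2/2 + δ/(2*m)) - 3/2 * b^2 = ((m - b)^2 * (m + 2*b)) / (2*m) := by
      rw [hδ2]; field_simp; ring
    have h2 : (0:ℝ) ≤ ((m - b)^2 * (m + 2*b)) / (2*m) :=
      div_nonneg h1 (by linarith)
    linarith
  have hphi : ∀ k : ℕ, phiDelta δ (k+2)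
      = ((k:ℝ)+1)^2/2 - ((k:ℝ)+1)/2 + (1+δ)/(2*((k:ℝ)+1)) + (δ-1)/2 := by
    intro k
    have h : ((k:ℝ)+1) ≠ 0 := by positivity
    unfold phiDelta
    push_cast
    rw [show ((k:ℝ) + 2 - 1) = (k:ℝ) + 1 from by ring]
    field_simp
    ring
  have lower : ∀ k : ℕ,
      (1/2)*δ + 3 / (2:ℝ) ^ ((5:ℝ)/3) * δ ^ ((2:ℝ)/3) - 2 * a ≤ phiDelta δ (k+2) := by
    intro k
    have hk0 : (0:ℝ) ≤ (k:ℝ) := Nat.cast_nonneg k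
    obtain ⟨m, hm_def⟩ : ∃ m : ℝ, m = (k:ℝ) + 1 := ⟨_, rfl⟩
    have hm1 : 1 ≤ m := by rw [hm_def]; linarith
    have hm0 : 0 < m := by linarith
    rw [hphi k, hT, ← hm_def]
    have hag := amgm m hm0
    rcases le_or_gt m (2*a) with hcase | hcase
    · have h2 : δ/(2*m) ≤ (1+δ)/(2*m) := by gcongr; linarith
      linarith
    · have h3 : m/2 ≤ m^2/4 := by nlinarith
      have h5 : 4*a^2 ≤ m^2 := by nlinarith
      have h6 : 0 < (1+δ)/(2*m) := by positivity
      linarith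
  have hbdd : BddBelow (Set.range fun k : ℕ => phiDelta δ (k+2)) := by
    refine ⟨(1/2)*δ + 3 / (2:ℝ) ^ ((5:ℝ)/3) * δ ^ ((2:ℝ)/3) - 2 * a, ?_⟩
    rintro x ⟨k, rfl⟩
    exact lower k
  -- upper bound at the natural number m = ⌈b⌉₊
  have hceil : 0 < ⌈b⌉₊ := Nat.ceil_pos.mpr hb_pos
  set K : ℕ := ⌈b⌉₊ - 1 with hK_def
  have hK1 : (K:ℝ) + 1 = (⌈b⌉₊ : ℝ) := by
    have h := Nat.succ_pred_eq_of_pos hceil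
    rw [hK_def]
    exact_mod_cast h
  have upper : phiDelta δ (K+2)
      ≤ (1/2)*δ + 3 / (2:ℝ) ^ ((5:ℝ)/3) * δ ^ ((2:ℝ)/3) + 2 * a := by
    obtain ⟨m, hm_def⟩ : ∃ m : ℝ, m = (K:ℝ) + 1 := ⟨_, rfl⟩
    rw [hphi K, hT, ← hm_def]
    have hmb : b ≤ m := by rw [hm_def, hK1]; exact Nat.le_ceil b
    have hmb1 : m ≤ b + 1 := by
      rw [hm_def, hK1]
      exact le_of_lt (Nat.ceil_lt_add_one hb_pos.le)
    have hm0 : 0 < m := lt_of_lt_of_le hb_pos hmb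
    have hm1 : 1 ≤ m := by
      have hk0 : (0:ℝ) ≤ (K:ℝ) := Nat.cast_nonneg K
      rw [hm_def]; linarith
    have hδ2 : δ = 2 * b^3 := by rw [hb3]; ring
    have hA : δ/(2*m) ≤ b^2 := by
      rw [hδ2, div_le_iff₀ (by linarith : (0:ℝ) < 2*m)]
      linarith [mul_nonneg (sq_nonneg b) (sub_nonneg.mpr hmb)]
    have hB : (1+δ)/(2*m) = δ/(2*m) + 1/(2*m) := by field_simp; ring
    have hC : 1/(2*m) ≤ 1/2 := by
      have h2 : (2:ℝ) ≤ 2*m := by linarith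
      exact one_div_le_one_div_of_le (by norm_num) h2
    have hD : m^2/2 ≤ (b+1)^2/2 := by nlinarith [hmb1, hm0.le]
    rw [hB]
    linarith [hA, hC, hD, hm1, hba, ha1, hb_pos.le]
  have hle : (⨅ k : ℕ, phiDelta δ (k+2)) ≤ phiDelta δ (K+2) := ciInf_le hbdd K
  have hge : (1/2)*δ + 3 / (2:ℝ) ^ ((5:ℝ)/3) * δ ^ ((2:ℝ)/3) - 2 * a
      ≤ ⨅ k : ℕ, phiDelta δ (k+2) := le_ciInf lower
  rw [abs_le]
  constructor <;> linarith
end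

section
/- Let h(δ) be the smallest minimizer over integers k >= 2 of φ_δ(k) = k(k-3)/2 + ((1+δ)/2)*k/(k-1). Then |h(δ) - ((1+δ)/2)^{1/3} - 1| <= 2 for all δ > 0. -/
/-- The smallest minimizer `h(δ)` of `φ_δ` over the integers `k ≥ 2` satisfies
`|h(δ) - ((1+δ)/2)^{1/3} - 1| ≤ 2` for all `δ > 0`. -/
theorem smallest_minimizer_location (δ : ℝ) (hδ : 0 < δ) (h : ℕ)
    (hh : IsLeast {k : ℕ | 2 ≤ k ∧ ∀ m : ℕ, 2 ≤ m → phiDelta δ k ≤ phiDelta δ m} h) :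
    |(h : ℝ) - ((1 + δ) / 2) ^ ((1 : ℝ) / 3) - 1| ≤ 2 := by
  obtain ⟨⟨hh2, hmin⟩, _⟩ := hh
  set c : ℝ := (1 + δ) / 2 with hc
  set t : ℝ := c ^ ((1 : ℝ) / 3) with ht
  have hcpos : 0 < c := by rw [hc]; linarith
  have htpos : 0 < t := Real.rpow_pos_of_pos hcpos _
  have ht3 : t ^ 3 = c := by
    rw [ht, ← Real.rpow_natCast (c ^ ((1 : ℝ) / 3)) 3, ← Real.rpow_mul hcpos.le]
    norm_num
  have hcast : (2 : ℝ) ≤ (h : ℝ) := by exact_mod_cast hh2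
  have diff : ∀ k : ℕ, 2 ≤ k →
      phiDelta δ (k + 1) - phiDelta δ k = ((k : ℝ) - 1) - c / ((k : ℝ) * ((k : ℝ) - 1)) := by
    intro k hk
    have hk2 : (2 : ℝ) ≤ (k : ℝ) := by exact_mod_cast hk
    have h0 : (k : ℝ) ≠ 0 := by linarith
    have h1 : (k : ℝ) - 1 ≠ 0 := by linarith
    simp only [phiDelta, Nat.cast_add, Nat.cast_one, hc]
    rw [add_sub_cancel_right]
    field_simp
    ring
  -- lower bound on h : c ≤ h (h-1)^2
  have hlow : c ≤ (h : ℝ) * ((h : ℝ) - 1) ^ 2 := by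
    have hm := hmin (h + 1) (by omega)
    have hd := diff h hh2
    have hpos : 0 < (h : ℝ) * ((h : ℝ) - 1) := by nlinarith
    have h0 : 0 ≤ ((h : ℝ) - 1) - c / ((h : ℝ) * ((h : ℝ) - 1)) := by
      rw [← hd]; linarith
    have h1 : c / ((h : ℝ) * ((h : ℝ) - 1)) ≤ (h : ℝ) - 1 := by linarith
    rw [div_le_iff₀ hpos] at h1
    nlinarith
  rw [abs_le]
  constructor
  · -- t ≤ h + 1
    by_contra hcon
    push_neg at hcon
    have htgt : (h : ℝ) + 1 < t := by linarith
    nlinarith [hlow, ht3, sq_nonneg (t - (h : ℝ) - 1), sq_nonneg ((h : ℝ) - 1), htpos, hcast]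
  · -- h ≤ t + 3
    by_contra hcon
    push_neg at hcon
    have hgt : t + 3 < (h : ℝ) := by linarith
    have hh4 : 4 ≤ h := by
      have h3 : (3 : ℝ) < (h : ℝ) := by linarith
      have : 3 < h := by exact_mod_cast h3
      omega
    have hm := hmin (h - 1) (by omega)
    have hd := diff (h - 1) (by omega)
    have hcastsub : ((h - 1 : ℕ) : ℝ) = (h : ℝ) - 1 := by
      push_cast [Nat.cast_sub (by omega : 1 ≤ h)]; ring
    rw [hcastsub] at hd
    have heq : h - 1 + 1 = h := by omega
    rw [heq] at hd
    have hpos : 0 < ((h : ℝ) - 1) * ((h : ℝ) - 1 - 1) := by nlinarith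
    have h0 : ((h : ℝ) - 1 - 1) - c / (((h : ℝ) - 1) * ((h : ℝ) - 1 - 1)) ≤ 0 := by
      rw [← hd]; linarith
    have h1 : (h : ℝ) - 2 ≤ c / (((h : ℝ) - 1) * ((h : ℝ) - 1 - 1)) := by linarith
    rw [le_div_iff₀ hpos] at h1
    nlinarith [ht3, htpos, hgt, h1, mul_pos htpos htpos, sq_nonneg ((h:ℝ) - t - 3), sq_nonneg t, sq_nonneg (t+1)]
end

section
/- Let Ỹ be a standard Gaussian conditioned on |Ỹ| > √(ε log log n), and let Ỹ_1,...,Ỹ_m be i.i.d. copies. There exists a universal constant C > 0 such that for all L > m and ε > 0, P(Ỹ_1^2 + ... + Ỹ_m^2 >= L) <= C^m * e^{-L/2} * e^{m/2} * (L/m)^m * e^{(ε m log log n)/2}. -/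
open MeasureTheory ProbabilityTheory

open Real Set Filter
open scoped ENNReal NNReal

noncomputable section
namespace CCST

def Sset (a : ℝ) : Set ℝ := {x : ℝ | a < |x|}

lemma measurableSet_S (a : ℝ) : MeasurableSet (Sset a) :=
  measurableSet_lt measurable_const measurable_abs

lemma pdf_eq (x : ℝ) : gaussianPDFReal 0 1 x = (Real.sqrt (2*π))⁻¹ * Real.exp (-x^2/2) := by
  simp [gaussianPDFReal]

lemma denom_lb {a : ℝ} (ha : 0 ≤ a) :
    ENNReal.ofReal ((Real.sqrt (2*π))⁻¹ * Real.exp (-(a^2+3)/2) / (1+a))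
      ≤ gaussianReal 0 1 (Sset a) := by
  rw [gaussianReal_apply_eq_integral 0 one_ne_zero]
  apply ENNReal.ofReal_le_ofReal
  have h1a : (0:ℝ) < 1 + a := by linarith
  set c : ℝ := a + 1/(1+a) with hc
  clear_value c
  have hac : a < c := by
    have : 0 < 1/(1+a) := by positivity
    rw [hc]; linarith
  have step1 : ∫ x in Ioc a c, ((Real.sqrt (2*π))⁻¹ * Real.exp (-c^2/2))
      ≤ ∫ x in Ioc a c, gaussianPDFReal 0 1 x := by
    apply setIntegral_mono_on
    · exact integrableOn_const measure_Ioc_lt_top.ne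
    · exact (integrable_gaussianPDFReal 0 1).integrableOn
    · exact measurableSet_Ioc
    · intro x hx
      rw [pdf_eq]
      have hx1 : a < x := hx.1
      have hx2 : x ≤ c := hx.2
      have hxx : x^2 ≤ c^2 := by nlinarith
      have : Real.exp (-c^2/2) ≤ Real.exp (-x^2/2) := by
        apply Real.exp_le_exp.2; linarith
      have hpos : (0:ℝ) ≤ (Real.sqrt (2*π))⁻¹ := by positivity
      exact mul_le_mul_of_nonneg_left this hpos
  have step2 : ∫ x in Ioc a c, gaussianPDFReal 0 1 x
      ≤ ∫ x in Sset a, gaussianPDFReal 0 1 x := by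
    apply setIntegral_mono_set
    · exact (integrable_gaussianPDFReal 0 1).integrableOn
    · exact Filter.Eventually.of_forall (fun x => gaussianPDFReal_nonneg 0 1 x)
    · apply HasSubset.Subset.eventuallyLE
      intro x hx
      have : a < x := hx.1
      have : a < |x| := lt_of_lt_of_le this (le_abs_self x)
      exact this
  have step0 : (Real.sqrt (2*π))⁻¹ * Real.exp (-(a^2+3)/2) / (1+a)
      ≤ ∫ x in Ioc a c, ((Real.sqrt (2*π))⁻¹ * Real.exp (-c^2/2)) := by
    rw [setIntegral_const, measureReal_def, Real.volume_Ioc, ENNReal.toReal_ofReal (by linarith)]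
    have hca : c - a = 1/(1+a) := by rw [hc]; ring
    rw [hca, smul_eq_mul]
    have hcsq : c^2 ≤ a^2 + 3 := by
      have h2 : 1/(1+a) ≤ 1 := by
        rw [div_le_one h1a]; linarith
      have h3 : a * (1/(1+a)) ≤ 1 := by
        rw [mul_one_div, div_le_one h1a]; linarith
      rw [hc]
      nlinarith [sq_nonneg (1/(1+a))]
    have : Real.exp (-(a^2+3)/2) ≤ Real.exp (-c^2/2) := by
      apply Real.exp_le_exp.2; linarith
    rw [div_eq_mul_inv, mul_comm (1/(1+a))]
    have hpos : (0:ℝ) ≤ (Real.sqrt (2*π))⁻¹ := by positivity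
    have h1ainv : (0:ℝ) ≤ (1+a)⁻¹ := by positivity
    calc (Real.sqrt (2*π))⁻¹ * Real.exp (-(a^2+3)/2) * (1+a)⁻¹
        ≤ (Real.sqrt (2*π))⁻¹ * Real.exp (-c^2/2) * (1+a)⁻¹ := by
          apply mul_le_mul_of_nonneg_right _ h1ainv
          exact mul_le_mul_of_nonneg_left this hpos
      _ = (Real.sqrt (2*π))⁻¹ * Real.exp (-c^2/2) * (1/(1+a)) := by rw [one_div]
      _ = (Real.sqrt (2*π))⁻¹ * Real.exp (-c^2/2) * (1/(1+a)) := rfl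
    -- orientation: goal is `... ≤ (1/(1+a)) * (...)`? fix later
  linarith [step0, step1, step2]



lemma int_Ioi_xexp {s : ℝ} (a : ℝ) (hs : 0 < s) :
    ∫ x in Ioi a, x * Real.exp (-(s/2) * x^2) = Real.exp (-(s/2) * a^2)/s := by
  have hs2 : (0:ℝ) < s/2 := by linarith
  have hderiv : ∀ x ∈ Ici a, HasDerivAt (fun x => -(Real.exp (-(s/2) * x^2)/s))
      (x * Real.exp (-(s/2) * x^2)) x := by
    intro x _
    have h1 : HasDerivAt (fun x : ℝ => -(s/2) * x^2) (-(s/2) * (2*x)) x := by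
      simpa using (hasDerivAt_pow 2 x).const_mul (-(s/2))
    have h2 : HasDerivAt (fun x => -(Real.exp (-(s/2) * x^2)/s)) (-(Real.exp (-(s/2)*x^2) * (-(s/2)*(2*x)) / s)) x := (h1.exp.div_const s).neg
    convert h2 using 1
    have hsne : s ≠ 0 := ne_of_gt hs
    have : -(Real.exp (-(s/2)*x^2) * (-(s/2)*(2*x)) / s) = x * Real.exp (-(s/2)*x^2) * (s / s) := by
      ring
    rw [this, div_self hsne, mul_one]
  have hint : IntegrableOn (fun x => x * Real.exp (-(s/2) * x^2)) (Ioi a) := by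
    exact (integrable_mul_exp_neg_mul_sq hs2).integrableOn
  have htend : Tendsto (fun x => -(Real.exp (-(s/2) * x^2)/s)) atTop (nhds 0) := by
    have h1 : Tendsto (fun x : ℝ => -(s/2) * x^2) atTop atBot := by
      apply Tendsto.const_mul_atTop_of_neg (by linarith : -(s/2) < 0)
      exact tendsto_pow_atTop two_ne_zero
    have h2 := (Real.tendsto_exp_atBot.comp h1).div_const s |>.neg
    simpa [neg_div] using h2
  have := integral_Ioi_of_hasDerivAt_of_tendsto' hderiv hint htend
  rw [this]
  field_simp
  ring

lemma Sset_eq (a : ℝ) : Sset a = Ioi a ∪ Iio (-a) := by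
  ext x
  simp [Sset, lt_abs, mem_Ioi, mem_Iio, lt_neg]

lemma numer_ub_B {s a : ℝ} (hs : 0 < s) (ha : 1 ≤ a) :
    ∫ x in Sset a, Real.exp (-(s/2) * x^2) ≤ 2/(s*a) * Real.exp (-(s/2) * a^2) := by
  have hs2 : (0:ℝ) < s/2 := by linarith
  have ha0 : (0:ℝ) < a := by linarith
  have hint : Integrable (fun x : ℝ => Real.exp (-(s/2) * x^2)) := integrable_exp_neg_mul_sq hs2
  have hxint : Integrable (fun x : ℝ => x * Real.exp (-(s/2) * x^2)) :=
    integrable_mul_exp_neg_mul_sq hs2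
  rw [Sset_eq, setIntegral_union (by
      rw [Set.disjoint_left]
      intro x hx1 hx2
      simp only [mem_Ioi, mem_Iio] at *
      linarith) measurableSet_Iio hint.integrableOn hint.integrableOn]
  have heven : ∫ x in Iio (-a), Real.exp (-(s/2) * x^2) = ∫ x in Ioi a, Real.exp (-(s/2) * x^2) := by
    rw [← integral_Iic_eq_integral_Iio, ← integral_comp_neg_Ioi]
    congr 1
    ext x
    ring_nf
  rw [heven]
  have key : ∫ x in Ioi a, Real.exp (-(s/2) * x^2) ≤ 1/(s*a) * Real.exp (-(s/2) * a^2) := by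
    have step : ∫ x in Ioi a, Real.exp (-(s/2) * x^2)
        ≤ ∫ x in Ioi a, (1/a) * (x * Real.exp (-(s/2) * x^2)) := by
      apply setIntegral_mono_on hint.integrableOn
        ((hxint.integrableOn).const_mul (1/a)) measurableSet_Ioi
      intro x hx
      have hx1 : a < x := hx
      have hx0 : (0:ℝ) < x := ha0.trans hx1
      have h1x : 1 ≤ x/a := (one_le_div ha0).2 hx1.le
      have hexp : (0:ℝ) < Real.exp (-(s/2) * x^2) := Real.exp_pos _
      calc Real.exp (-(s/2) * x^2) = 1 * Real.exp (-(s/2) * x^2) := by ring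
        _ ≤ (x/a) * Real.exp (-(s/2) * x^2) := by
            apply mul_le_mul_of_nonneg_right h1x hexp.le
        _ = (1/a) * (x * Real.exp (-(s/2) * x^2)) := by ring
    rw [integral_const_mul, int_Ioi_xexp a hs] at step
    calc ∫ x in Ioi a, Real.exp (-(s/2) * x^2) ≤ 1/a * (Real.exp (-(s/2) * a^2)/s) := step
      _ = 1/(s*a) * Real.exp (-(s/2) * a^2) := by field_simp
  have h2 : 2/(s*a) * Real.exp (-(s/2) * a^2)
      = 1/(s*a) * Real.exp (-(s/2) * a^2) + 1/(s*a) * Real.exp (-(s/2) * a^2) := by ring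
  linarith

lemma numer_ub_A {s : ℝ} (a : ℝ) (hs : 0 < s) :
    ∫ x in Sset a, Real.exp (-(s/2) * x^2) ≤ Real.sqrt (2*π/s) := by
  have hs2 : (0:ℝ) < s/2 := by linarith
  have hint : Integrable (fun x : ℝ => Real.exp (-(s/2) * x^2)) := integrable_exp_neg_mul_sq hs2
  calc ∫ x in Sset a, Real.exp (-(s/2) * x^2) ≤ ∫ x, Real.exp (-(s/2) * x^2) :=
      setIntegral_le_integral hint (Filter.Eventually.of_forall fun x => (Real.exp_pos _).le)
    _ = Real.sqrt (π / (s/2)) := integral_gaussian (s/2)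
    _ = Real.sqrt (2*π/s) := by rw [div_div_eq_mul_div]; ring_nf

open ENNReal

lemma pdf_mul_g {s : ℝ} (x : ℝ) :
    gaussianPDFReal 0 1 x * Real.exp ((1-s)/2 * x^2)
      = (Real.sqrt (2*π))⁻¹ * Real.exp (-(s/2) * x^2) := by
  have : gaussianPDFReal 0 1 x = (Real.sqrt (2*π))⁻¹ * Real.exp (-x^2/2) := by
    simp [gaussianPDFReal]
  rw [this, mul_assoc, ← Real.exp_add]
  ring_nf

lemma setIntegral_g (s a : ℝ) :
    ∫ x in Sset a, Real.exp ((1-s)/2 * x^2) ∂(gaussianReal 0 1)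
      = (Real.sqrt (2*π))⁻¹ * ∫ x in Sset a, Real.exp (-(s/2) * x^2) := by
  have hγ : gaussianReal 0 1
      = volume.withDensity (fun x => ((gaussianPDFReal 0 1 x).toNNReal : ℝ≥0∞)) := by
    rw [gaussianReal_of_var_ne_zero 0 one_ne_zero]; rfl
  rw [hγ, setIntegral_withDensity_eq_setIntegral_smul₀
    ((measurable_gaussianPDFReal 0 1).real_toNNReal.aemeasurable) _ (measurableSet_S a)]
  rw [← integral_const_mul]
  apply setIntegral_congr_fun (measurableSet_S a)
  intro x _
  simp only [NNReal.smul_def]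
  rw [Real.coe_toNNReal _ (gaussianPDFReal_nonneg 0 1 x)]
  exact pdf_mul_g x

lemma dpos {a : ℝ} (ha : 0 ≤ a) :
    0 < (Real.sqrt (2*π))⁻¹ * Real.exp (-(a^2+3)/2) / (1+a) := by
  have : (0:ℝ) < Real.sqrt (2*π) := Real.sqrt_pos.2 (by positivity)
  positivity

lemma gauss_S_ne_zero {a : ℝ} (ha : 0 ≤ a) : gaussianReal 0 1 (Sset a) ≠ 0 := by
  have h := denom_lb ha
  intro h0
  rw [h0, nonpos_iff_eq_zero, ENNReal.ofReal_eq_zero] at h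
  exact absurd h (not_le.2 (dpos ha))

lemma inv_toReal_le {a : ℝ} (ha : 0 ≤ a) :
    ((gaussianReal 0 1 (Sset a))⁻¹).toReal
      ≤ ((Real.sqrt (2*π))⁻¹ * Real.exp (-(a^2+3)/2) / (1+a))⁻¹ := by
  set d := (Real.sqrt (2*π))⁻¹ * Real.exp (-(a^2+3)/2) / (1+a) with hd
  have hd0 : 0 < d := dpos ha
  rw [ENNReal.toReal_inv]
  have h1 : d ≤ (gaussianReal 0 1 (Sset a)).toReal := by
    have := ENNReal.toReal_mono (measure_ne_top _ _) (denom_lb ha)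
    rwa [ENNReal.toReal_ofReal hd0.le] at this
  exact inv_anti₀ hd0 h1

lemma numer_nonneg (s a : ℝ) : 0 ≤ ∫ x in Sset a, Real.exp (-(s/2) * x^2) :=
  integral_nonneg fun x => (Real.exp_pos _).le

lemma integral_cond_eq (s a : ℝ) :
    ∫ x, Real.exp ((1-s)/2 * x^2) ∂((gaussianReal 0 1)[|Sset a])
      = ((gaussianReal 0 1 (Sset a))⁻¹).toReal
        * ((Real.sqrt (2*π))⁻¹ * ∫ x in Sset a, Real.exp (-(s/2) * x^2)) := by
  rw [ProbabilityTheory.cond, integral_smul_measure, smul_eq_mul, setIntegral_g]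

lemma mgf_nu_le {s a : ℝ} (hs : 0 < s) (hs1 : s ≤ 1) (ha : 0 ≤ a) :
    ∫ x, Real.exp ((1-s)/2 * x^2) ∂((gaussianReal 0 1)[|Sset a])
      ≤ 100/s * Real.exp ((1-s)/2 * a^2) := by
  rw [integral_cond_eq]
  set d := (Real.sqrt (2*π))⁻¹ * Real.exp (-(a^2+3)/2) / (1+a) with hd
  have hd0 : 0 < d := dpos ha
  have hsqrt2pi : (0:ℝ) < Real.sqrt (2*π) := Real.sqrt_pos.2 (by positivity)
  have hsq : Real.sqrt (2*π) ≤ 2.51 := by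
    rw [show (2.51:ℝ) = Real.sqrt (2.51^2) from (Real.sqrt_sq (by norm_num)).symm]
    apply Real.sqrt_le_sqrt
    nlinarith [Real.pi_lt_d2]
  have hN := numer_nonneg s a
  have hstep : ((gaussianReal 0 1 (Sset a))⁻¹).toReal
        * ((Real.sqrt (2*π))⁻¹ * ∫ x in Sset a, Real.exp (-(s/2) * x^2))
      ≤ d⁻¹ * ((Real.sqrt (2*π))⁻¹ * ∫ x in Sset a, Real.exp (-(s/2) * x^2)) := by
    apply mul_le_mul_of_nonneg_right (inv_toReal_le ha)
    positivity
  refine hstep.trans ?_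
  have hda : d⁻¹ * (Real.sqrt (2*π))⁻¹ = (1+a) * Real.exp ((a^2+3)/2) := by
    rw [hd, show -(a^2+3)/2 = -((a^2+3)/2) by ring, Real.exp_neg]
    have h1a : (0:ℝ) < 1 + a := by linarith
    have he : Real.exp ((a^2+3)/2) ≠ 0 := (Real.exp_pos _).ne'
    field_simp
  rw [← mul_assoc, hda]
  rcases le_total a 1 with hA | hB
  · -- case a ≤ 1
    have hNA := numer_ub_A a hs
    have h1 : (1+a) * Real.exp ((a^2+3)/2) * ∫ x in Sset a, Real.exp (-(s/2) * x^2)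
        ≤ (1+a) * Real.exp ((a^2+3)/2) * Real.sqrt (2*π/s) := by
      apply mul_le_mul_of_nonneg_left hNA
      positivity
    refine h1.trans ?_
    have he2 : Real.exp ((a^2+3)/2) ≤ Real.exp 2 := by
      apply Real.exp_le_exp.2; nlinarith
    have hexp2 : Real.exp 2 ≤ 7.39 := by
      rw [show (2:ℝ) = 1 + 1 by norm_num, Real.exp_add]
      nlinarith [Real.exp_one_lt_d9, Real.exp_pos 1]
    have hsqs : Real.sqrt (2*π/s) ≤ 2.51 / s := by
      rw [show (2.51/s : ℝ) = Real.sqrt ((2.51/s)^2) from (Real.sqrt_sq (by positivity)).symm]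
      apply Real.sqrt_le_sqrt
      rw [div_pow, div_le_div_iff₀ hs (by positivity)]
      nlinarith [Real.pi_lt_d2, mul_nonneg (mul_nonneg hs.le hs.le) (sub_nonneg.2 hs1),
        mul_nonneg hs.le (sub_nonneg.2 hs1)]
    have hone : (1:ℝ) ≤ Real.exp ((1-s)/2 * a^2) := by
      apply Real.one_le_exp; nlinarith
    have h2 : (1+a) * Real.exp ((a^2+3)/2) * Real.sqrt (2*π/s) ≤ 100/s := by
      have hs' : 0 < s := hs
      have hsqnn : 0 ≤ Real.sqrt (2*π/s) := Real.sqrt_nonneg _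
      calc (1+a) * Real.exp ((a^2+3)/2) * Real.sqrt (2*π/s)
          ≤ 2 * 7.39 * (2.51/s) := by
            apply mul_le_mul (by nlinarith [Real.exp_pos ((a^2+3)/2)]) hsqs hsqnn (by norm_num)
        _ = 37.0978/s := by ring
        _ ≤ 100/s := by gcongr <;> norm_num
    calc (1+a) * Real.exp ((a^2+3)/2) * Real.sqrt (2*π/s) ≤ 100/s := h2
      _ = 100/s * 1 := by ring
      _ ≤ 100/s * Real.exp ((1-s)/2 * a^2) := by
          apply mul_le_mul_of_nonneg_left hone (by positivity)
  · -- case 1 ≤ a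
    have hNB := numer_ub_B hs hB
    have h1 : (1+a) * Real.exp ((a^2+3)/2) * ∫ x in Sset a, Real.exp (-(s/2) * x^2)
        ≤ (1+a) * Real.exp ((a^2+3)/2) * (2/(s*a) * Real.exp (-(s/2) * a^2)) := by
      apply mul_le_mul_of_nonneg_left hNB
      positivity
    refine h1.trans ?_
    have hexp : Real.exp ((a^2+3)/2) * Real.exp (-(s/2) * a^2)
        = Real.exp (3/2) * Real.exp ((1-s)/2 * a^2) := by
      rw [← Real.exp_add, ← Real.exp_add]
      ring_nf
    have hkey : (1+a) * Real.exp ((a^2+3)/2) * (2/(s*a) * Real.exp (-(s/2) * a^2))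
        = (2*(1+a)/(s*a)) * (Real.exp ((a^2+3)/2) * Real.exp (-(s/2) * a^2)) := by ring
    rw [hkey, hexp]
    have ha0 : (0:ℝ) < a := by linarith
    have hb : 2*(1+a)/(s*a) ≤ 4/s := by
      rw [div_le_div_iff₀ (by positivity) hs]
      nlinarith
    have hexp32 : Real.exp (3/2 : ℝ) ≤ 7.39 := by
      have h1 : Real.exp (3/2 : ℝ) ≤ Real.exp 2 := Real.exp_le_exp.2 (by norm_num)
      have hexp2 : Real.exp 2 ≤ 7.39 := by
        rw [show (2:ℝ) = 1 + 1 by norm_num, Real.exp_add]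
        nlinarith [Real.exp_one_lt_d9, Real.exp_pos 1]
      linarith
    have hE : (0:ℝ) < Real.exp ((1-s)/2 * a^2) := Real.exp_pos _
    calc 2*(1+a)/(s*a) * (Real.exp (3/2) * Real.exp ((1-s)/2 * a^2))
        ≤ 4/s * (7.39 * Real.exp ((1-s)/2 * a^2)) := by
          apply mul_le_mul hb (mul_le_mul_of_nonneg_right hexp32 hE.le)
            (by positivity) (by positivity)
      _ ≤ 100/s * Real.exp ((1-s)/2 * a^2) := by
          rw [show (4:ℝ)/s * (7.39 * Real.exp ((1-s)/2 * a^2)) = 29.56/s * Real.exp ((1-s)/2 * a^2) by ring]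
          apply mul_le_mul_of_nonneg_right _ hE.le
          gcongr <;> norm_num

end CCST

namespace CCST

lemma integrable_g_cond {s a : ℝ} (hs : 0 < s) (ha : 0 ≤ a) :
    Integrable (fun x => Real.exp ((1-s)/2 * x^2)) ((gaussianReal 0 1)[|Sset a]) := by
  rw [ProbabilityTheory.cond]
  apply Integrable.smul_measure _ (ENNReal.inv_ne_top.2 (gauss_S_ne_zero ha))
  have hγ : gaussianReal 0 1
      = volume.withDensity (fun x => ((gaussianPDFReal 0 1 x).toNNReal : ℝ≥0∞)) := by
    rw [gaussianReal_of_var_ne_zero 0 one_ne_zero]; rfl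
  rw [hγ, restrict_withDensity (measurableSet_S a),
    integrable_withDensity_iff_integrable_smul₀
      ((measurable_gaussianPDFReal 0 1).real_toNNReal.aemeasurable)]
  have heq : (fun x => (gaussianPDFReal 0 1 x).toNNReal • Real.exp ((1-s)/2 * x^2))
      = fun x => (Real.sqrt (2*π))⁻¹ * Real.exp (-(s/2) * x^2) := by
    funext x
    simp only [NNReal.smul_def]
    rw [Real.coe_toNNReal _ (gaussianPDFReal_nonneg 0 1 x)]
    exact pdf_mul_g x
  rw [heq]
  exact (((integrable_exp_neg_mul_sq (by linarith : (0:ℝ) < s/2)).const_mul _)).integrableOn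

lemma iIndepFun_ae_congr {Ω : Type} [MeasurableSpace Ω] {μ : Measure Ω} {κ : Type}
    {f g : κ → Ω → ℝ}
    (h : iIndepFun f μ) (hae : ∀ i, f i =ᵐ[μ] g i) :
    iIndepFun g μ := by
  rw [iIndepFun_iff_measure_inter_preimage_eq_mul] at h ⊢
  intro S sets hsets
  have h1 : ∀ i, (f i ⁻¹' sets i : Set Ω) =ᵐ[μ] (g i ⁻¹' sets i) := by
    intro i
    filter_upwards [hae i] with ω hω
    change (f i ω ∈ sets i) = (g i ω ∈ sets i)
    rw [hω]
  have h2 : (⋂ i ∈ S, g i ⁻¹' sets i) =ᵐ[μ] (⋂ i ∈ S, f i ⁻¹' sets i) := by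
    have hball : ∀ᵐ ω ∂μ, ∀ i ∈ S, f i ω = g i ω :=
      (ae_ball_iff S.countable_toSet).2 fun i _ => hae i
    filter_upwards [hball] with ω hω
    change (ω ∈ ⋂ i ∈ S, g i ⁻¹' sets i) = (ω ∈ ⋂ i ∈ S, f i ⁻¹' sets i)
    simp only [Set.mem_iInter, Set.mem_preimage, eq_iff_iff]
    constructor
    · intro hmem i hi; rw [hω i hi]; exact hmem i hi
    · intro hmem i hi; rw [← hω i hi]; exact hmem i hi
  rw [measure_congr h2, h S hsets]
  exact Finset.prod_congr rfl fun i _ => measure_congr (h1 i)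

end CCST
end

/-- Let `Ỹ₁, …, Ỹ_m` be i.i.d. copies of a standard Gaussian conditioned on
`|Ỹ| > √(ε log log n)`. There is a universal constant `C > 0` such that for all
`L > m` and `ε > 0`,
`P(Ỹ₁² + ⋯ + Ỹ_m² ≥ L) ≤ Cᵐ e^{-L/2} e^{m/2} (L/m)ᵐ e^{ε m log log n / 2}`. -/
theorem conditioned_chi_square_tail :
    ∃ C : ℝ, 0 < C ∧ ∀ (n m : ℕ) (ε L : ℝ), 0 < ε →
      0 < Real.log (Real.log n) → (m : ℝ) < L →
      ∀ (Ω : Type) (_ : MeasurableSpace Ω) (μ : Measure Ω),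
        IsProbabilityMeasure μ →
        ∀ Y : Fin m → Ω → ℝ,
          iIndepFun Y μ →
          (∀ i, Measure.map (Y i) μ =
            ProbabilityTheory.cond (gaussianReal 0 1)
              {x : ℝ | Real.sqrt (ε * Real.log (Real.log n)) < |x|}) →
          μ {ω | L ≤ ∑ i, (Y i ω) ^ 2}
            ≤ ENNReal.ofReal (C ^ m * Real.exp (-L / 2) * Real.exp ((m : ℝ) / 2)
                * (L / m) ^ m * Real.exp (ε * m * Real.log (Real.log n) / 2)) := by
  classical
  refine ⟨100, by norm_num, ?_⟩
  intro n m ε L hε hlog hmL Ω mΩ μ hProb Y hIndep hMap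
  set a : ℝ := Real.sqrt (ε * Real.log (Real.log n)) with hadef
  have ha2 : a^2 = ε * Real.log (Real.log n) := Real.sq_sqrt (by positivity)
  have ha0 : 0 ≤ a := Real.sqrt_nonneg _
  have hSeq : {x : ℝ | a < |x|} = CCST.Sset a := rfl
  have hMap' : ∀ i, Measure.map (Y i) μ = (gaussianReal 0 1)[|CCST.Sset a] := by
    intro i; exact hMap i
  rcases Nat.eq_zero_or_pos m with hm0 | hm
  · subst hm0
    have hL0 : (0:ℝ) < L := by exact_mod_cast hmL
    have hempty : {ω : Ω | L ≤ ∑ i : Fin 0, (Y i ω) ^ 2} = (∅ : Set Ω) := by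
      ext ω
      simp only [Set.mem_setOf_eq, Set.mem_empty_iff_false, iff_false, not_le,
        Finset.univ_eq_empty, Finset.sum_empty]
      exact hL0
    rw [hempty, measure_empty]
    exact zero_le
  -- main case m ≥ 1
  have hm1 : (1:ℝ) ≤ (m:ℝ) := by exact_mod_cast hm
  have hL0 : (0:ℝ) < L := lt_of_le_of_lt (by linarith) hmL
  have hLne : L ≠ 0 := hL0.ne'
  set s : ℝ := (m:ℝ) / L with hsdef
  have hs0 : 0 < s := by positivity
  have hs1 : s ≤ 1 := by
    rw [hsdef, div_le_one hL0]; linarith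
  set t : ℝ := (1 - s)/2 with htdef
  have ht0 : 0 ≤ t := by rw [htdef]; linarith
  -- measurability
  have hPM : IsProbabilityMeasure ((gaussianReal 0 1)[|CCST.Sset a]) :=
    cond_isProbabilityMeasure (CCST.gauss_S_ne_zero ha0)
  have hAE : ∀ i, AEMeasurable (Y i) μ := by
    intro i
    by_contra h
    have h0 := Measure.map_of_not_aemeasurable h
    rw [hMap' i] at h0
    have h1 : ((gaussianReal 0 1)[|CCST.Sset a]) Set.univ = 1 := hPM.measure_univ
    rw [h0] at h1
    simp at h1
  set Y' : Fin m → Ω → ℝ := fun i => (hAE i).mk (Y i) with hY'def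
  have hY'meas : ∀ i, Measurable (Y' i) := fun i => (hAE i).measurable_mk
  have hY'ae : ∀ i, Y i =ᵐ[μ] Y' i := fun i => (hAE i).ae_eq_mk
  have hY'map : ∀ i, Measure.map (Y' i) μ = (gaussianReal 0 1)[|CCST.Sset a] := fun i => by
    rw [← Measure.map_congr (hY'ae i), hMap' i]
  have hIndep' : iIndepFun Y' μ :=
    CCST.iIndepFun_ae_congr hIndep hY'ae
  set X : Fin m → Ω → ℝ := fun i ω => (Y' i ω)^2 with hXdef
  have hXmeas : ∀ i, Measurable (X i) := fun i => (hY'meas i).pow_const 2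
  have hXindep : iIndepFun X μ := by
    have := hIndep'.comp (fun _ => fun x : ℝ => x^2) (fun _ => measurable_id.pow_const 2)
    exact this
  -- integrability per coordinate
  have hg_int : Integrable (fun x => Real.exp (t * x^2)) ((gaussianReal 0 1)[|CCST.Sset a]) := by
    rw [htdef]; exact CCST.integrable_g_cond hs0 ha0
  have hgsm : AEStronglyMeasurable (fun x : ℝ => Real.exp (t * x^2))
      ((gaussianReal 0 1)[|CCST.Sset a]) :=
    (Real.continuous_exp.comp (continuous_const.mul (continuous_pow 2))).aestronglyMeasurable
  have hInt : ∀ i, Integrable (fun ω => Real.exp (t * X i ω)) μ := by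
    intro i
    have h1 : Integrable (fun x => Real.exp (t * x^2)) (Measure.map (Y' i) μ) := by
      rw [hY'map i]; exact hg_int
    rw [integrable_map_measure (by rw [hY'map i]; exact hgsm) (hY'meas i).aemeasurable] at h1
    exact h1
  -- mgf bound per coordinate
  have hmgf_le : ∀ i, mgf (X i) μ t ≤ 100/s * Real.exp (t * a^2) := by
    intro i
    have h1 : mgf (X i) μ t = ∫ x, Real.exp (t * x^2) ∂((gaussianReal 0 1)[|CCST.Sset a]) := by
      rw [mgf, ← hY'map i, integral_map (hY'meas i).aemeasurable (by rw [hY'map i]; exact hgsm)]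
    rw [h1]
    have h2 := CCST.mgf_nu_le hs0 hs1 ha0
    calc ∫ x, Real.exp (t * x^2) ∂((gaussianReal 0 1)[|CCST.Sset a])
        = ∫ x, Real.exp ((1-s)/2 * x^2) ∂((gaussianReal 0 1)[|CCST.Sset a]) := by rw [htdef]
      _ ≤ 100/s * Real.exp ((1-s)/2 * a^2) := h2
      _ = 100/s * Real.exp (t * a^2) := by rw [htdef]
  -- Chernoff
  have hIntSum : Integrable (fun ω => Real.exp (t * (∑ i, X i) ω)) μ :=
    hXindep.integrable_exp_mul_sum hXmeas (fun i _ => hInt i)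
  have hChern := measure_ge_le_exp_mul_mgf (X := ∑ i, X i) (μ := μ) L ht0 hIntSum
  have hmgfsum : mgf (∑ i, X i) μ t = ∏ i, mgf (X i) μ t := hXindep.mgf_sum hXmeas Finset.univ
  -- event sets agree a.e.
  have hseteq : μ {ω | L ≤ ∑ i, (Y i ω)^2} = μ {ω | L ≤ (∑ i, X i) ω} := by
    apply measure_congr
    have hball : ∀ᵐ ω ∂μ, ∀ i, Y i ω = Y' i ω := ae_all_iff.2 fun i => hY'ae i
    filter_upwards [hball] with ω hω
    change (L ≤ ∑ i, (Y i ω)^2) = (L ≤ (∑ i, X i) ω)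
    have : (∑ i, X i) ω = ∑ i, (Y i ω)^2 := by
      rw [Finset.sum_apply]
      exact Finset.sum_congr rfl fun i _ => by rw [hω i]
    rw [this]
  rw [hseteq, ← ENNReal.ofReal_toReal (measure_ne_top μ _)]
  apply ENNReal.ofReal_le_ofReal
  -- product bound
  have hprod : ∏ i, mgf (X i) μ t ≤ (100/s * Real.exp (t * a^2))^m := by
    calc ∏ i, mgf (X i) μ t ≤ ∏ _i : Fin m, (100/s * Real.exp (t * a^2)) := by
          apply Finset.prod_le_prod (fun i _ => mgf_nonneg) (fun i _ => hmgf_le i)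
      _ = (100/s * Real.exp (t * a^2))^m := by
          rw [Finset.prod_const, Finset.card_univ, Fintype.card_fin]
  have hfinal : Real.exp (-t * L) * (100/s * Real.exp (t * a^2))^m
      ≤ 100^m * Real.exp (-L/2) * Real.exp ((m:ℝ)/2) * (L/(m:ℝ))^m
        * Real.exp (ε * m * Real.log (Real.log n) / 2) := by
    have hsL : s * L = m := by rw [hsdef]; field_simp
    have h1 : Real.exp (-t * L) = Real.exp (-L/2) * Real.exp ((m:ℝ)/2) := by
      rw [← Real.exp_add]
      congr 1
      rw [htdef, ← hsL]
      ring
    have h2 : (100/s : ℝ) = 100 * (L/(m:ℝ)) := by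
      rw [hsdef, div_div_eq_mul_div, mul_div_assoc]
    have h3 : (Real.exp (t * a^2))^m = Real.exp ((m:ℝ) * (t * a^2)) := by
      rw [← Real.exp_nat_mul]
    have h4 : Real.exp ((m:ℝ) * (t * a^2)) ≤ Real.exp (ε * m * Real.log (Real.log n) / 2) := by
      apply Real.exp_le_exp.2
      have hta : t ≤ 1/2 := by rw [htdef]; linarith
      have hre : ε * m * Real.log (Real.log n) / 2 = (m:ℝ) * a^2 / 2 := by rw [ha2]; ring
      rw [hre]
      nlinarith [mul_nonneg (Nat.cast_nonneg m : (0:ℝ) ≤ (m:ℝ)) (sq_nonneg a)]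
    calc Real.exp (-t * L) * (100/s * Real.exp (t * a^2))^m
        = Real.exp (-L/2) * Real.exp ((m:ℝ)/2) * ((100 * (L/(m:ℝ)))^m
            * Real.exp ((m:ℝ) * (t * a^2))) := by rw [h1, h2, mul_pow, h3]
      _ ≤ Real.exp (-L/2) * Real.exp ((m:ℝ)/2) * ((100 * (L/(m:ℝ)))^m
            * Real.exp (ε * m * Real.log (Real.log n) / 2)) := by
          apply mul_le_mul_of_nonneg_left _ (by positivity)
          apply mul_le_mul_of_nonneg_left h4 (by positivity)
      _ = 100^m * Real.exp (-L/2) * Real.exp ((m:ℝ)/2) * (L/(m:ℝ))^m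
            * Real.exp (ε * m * Real.log (Real.log n) / 2) := by
          rw [mul_pow]; ring
  calc (μ {ω | L ≤ (∑ i, X i) ω}).toReal
      ≤ Real.exp (-t * L) * mgf (∑ i, X i) μ t := hChern
    _ = Real.exp (-t * L) * ∏ i, mgf (X i) μ t := by rw [hmgfsum]
    _ ≤ Real.exp (-t * L) * (100/s * Real.exp (t * a^2))^m := by
        apply mul_le_mul_of_nonneg_left hprod (Real.exp_pos _).le
    _ ≤ _ := hfinal
end

section
/- Let Ỹ be a standard Gaussian conditioned on |Ỹ| > t for some t > 0. Then for every s ∈ (0, 1/2), E[e^{s Ỹ^2}] <= C * (1/(1-2s)) * e^{s t^2} for some universal constant C > 0. -/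
open MeasureTheory ProbabilityTheory Real Set

lemma aux_Ioi {k : ℝ} (hk : 0 < k) (t : ℝ) :
    ∫ x in Set.Ioi t, x * Real.exp (-k * x^2) = Real.exp (-k*t^2)/(2*k) := by
  have h := integral_Ioi_of_hasDerivAt_of_tendsto'
    (f := fun x : ℝ => -(2*k)⁻¹ * Real.exp (-k * x^2))
    (f' := fun x : ℝ => x * Real.exp (-k * x^2)) (a := t) (m := 0)
    ?_ ?_ ?_
  · rw [h]; field_simp; ring
  · intro x hx
    have h1 : HasDerivAt (fun x : ℝ => -k * x^2) (-k * (2*x)) x := by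
      simpa using ((hasDerivAt_pow 2 x).const_mul (-k))
    have h2 := (h1.exp).const_mul (-(2*k)⁻¹)
    convert h2 using 1
    case e'_4 => rfl
    field_simp
  · exact (integrable_mul_exp_neg_mul_sq hk).integrableOn
  · have h3 : Filter.Tendsto (fun x : ℝ => Real.exp (-k * x^2)) Filter.atTop (nhds 0) := by
      apply Real.tendsto_exp_atBot.comp
      exact Filter.Tendsto.const_mul_atTop_of_neg (by linarith)
        (Filter.tendsto_pow_atTop two_ne_zero)
    simpa using h3.const_mul (-(2*k)⁻¹)

lemma tail_split (t : ℝ) : {x : ℝ | t < |x|} = Iio (-t) ∪ Ioi t := by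
  ext x
  simp only [mem_setOf_eq, mem_union, mem_Iio, mem_Ioi, lt_abs]
  constructor
  · rintro (h | h); · exact Or.inr h
    · exact Or.inl (by linarith)
  · rintro (h | h); · exact Or.inr (by linarith)
    · exact Or.inl h

lemma tail_bound {k t : ℝ} (hk : 0 < k) (ht : 0 < t) :
    ∫ x in {x : ℝ | t < |x|}, Real.exp (-k * x^2) ≤ Real.exp (-k*t^2)/(k*t) := by
  have hint : Integrable (fun x : ℝ => Real.exp (-k*x^2)) := integrable_exp_neg_mul_sq hk
  rw [tail_split, setIntegral_union (by
      rw [Set.disjoint_left]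
      intro x hx hx2
      simp only [mem_Iio, mem_Ioi] at *
      linarith) measurableSet_Ioi
    hint.integrableOn hint.integrableOn]
  have hswap : ∫ x in Iio (-t), Real.exp (-k*x^2) = ∫ x in Ioi t, Real.exp (-k*x^2) := by
    rw [← integral_Iic_eq_integral_Iio, ← integral_comp_neg_Ioi]
    simp [neg_sq]
  have hmono : ∫ x in Ioi t, Real.exp (-k*x^2) ≤ ∫ x in Ioi t, x * Real.exp (-k*x^2) / t := by
    apply setIntegral_mono_on hint.integrableOn
      (((integrable_mul_exp_neg_mul_sq hk).div_const t).integrableOn) measurableSet_Ioi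
    intro x hx
    rw [mem_Ioi] at hx
    rw [le_div_iff₀ ht]
    have : 0 < Real.exp (-k*x^2) := Real.exp_pos _
    nlinarith
  have hval : ∫ x in Ioi t, x * Real.exp (-k*x^2) / t = Real.exp (-k*t^2)/(2*k) / t := by
    rw [integral_div, aux_Ioi hk]
  rw [hswap]
  have h1 := hmono
  rw [hval] at h1
  have h2 : Real.exp (-k*t^2)/(2*k)/t + Real.exp (-k*t^2)/(2*k)/t = Real.exp (-k*t^2)/(k*t) := by
    field_simp; ring
  linarith

set_option maxHeartbeats 1000000 in
/-- Let `Ỹ` be a standard Gaussian conditioned on `|Ỹ| > t`, `t > 0`. Then for every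
`s ∈ (0, 1/2)`, `E[exp(s Ỹ²)] ≤ C · (1/(1-2s)) · exp(s t²)` for a universal `C > 0`. -/
theorem conditioned_gaussian_mgf :
    ∃ C : ℝ, 0 < C ∧ ∀ t : ℝ, 0 < t → ∀ s : ℝ, 0 < s → s < 1 / 2 →
      (∫ x, Real.exp (s * x ^ 2)
          ∂(ProbabilityTheory.cond (gaussianReal 0 1) {x : ℝ | t < |x|}))
        ≤ C * (1 / (1 - 2 * s)) * Real.exp (s * t ^ 2) := by
  refine ⟨12 * Real.exp 2, by positivity, ?_⟩
  intro t ht s hs hs2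
  have hA : MeasurableSet {x : ℝ | t < |x|} :=
    measurableSet_lt measurable_const measurable_abs
  have hk : 0 < 1/2 - s := by linarith
  set c₀ : ℝ := (Real.sqrt (2*Real.pi))⁻¹ with hc0
  have hc0pos : 0 < c₀ := by positivity
  have hpdf : ∀ x : ℝ, gaussianPDFReal 0 1 x = c₀ * Real.exp (-(1/2) * x^2) := by
    intro x
    unfold gaussianPDFReal
    simp only [NNReal.coe_one, mul_one, sub_zero]
    rw [hc0]
    congr 1
    ring_nf
  -- Step 1: reduce conditional integral to density integral
  have h1 : (∫ x, Real.exp (s * x ^ 2)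
        ∂(ProbabilityTheory.cond (gaussianReal 0 1) {x : ℝ | t < |x|}))
      = ((gaussianReal 0 1 {x : ℝ | t < |x|}).toReal)⁻¹ *
        ∫ x in {x : ℝ | t < |x|}, gaussianPDFReal 0 1 x * Real.exp (s * x ^ 2) := by
    rw [ProbabilityTheory.cond, integral_smul_measure, ENNReal.toReal_inv, smul_eq_mul]
    congr 1
    rw [gaussianReal_of_var_ne_zero _ one_ne_zero]
    rw [show gaussianPDF 0 1 = fun x => ((gaussianPDFReal 0 1 x).toNNReal : ENNReal) from rfl]
    rw [setIntegral_withDensity_eq_setIntegral_smul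
      (measurable_gaussianPDFReal 0 1).real_toNNReal _ hA]
    apply setIntegral_congr_fun hA
    intro x _
    simp [NNReal.smul_def, Real.coe_toNNReal _ (gaussianPDFReal_nonneg 0 1 x)]
  -- Step 2: pointwise simplification
  have h3 : ∀ x : ℝ, gaussianPDFReal 0 1 x * Real.exp (s * x ^ 2)
      = c₀ * Real.exp (-(1/2-s) * x^2) := by
    intro x
    rw [hpdf, mul_assoc, ← Real.exp_add]
    congr 2
    ring
  have h4 : (∫ x in {x : ℝ | t < |x|}, gaussianPDFReal 0 1 x * Real.exp (s * x ^ 2))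
      = c₀ * ∫ x in {x : ℝ | t < |x|}, Real.exp (-(1/2-s) * x^2) := by
    simp_rw [h3]
    rw [integral_const_mul]
  set N : ℝ := ∫ x in {x : ℝ | t < |x|}, Real.exp (-(1/2-s) * x^2) with hNdef
  have hN0 : 0 ≤ N := setIntegral_nonneg hA fun x _ => (Real.exp_pos _).le
  -- Step 3: the denominator
  have hD : (gaussianReal 0 1 {x : ℝ | t < |x|}).toReal
      = ∫ x in {x : ℝ | t < |x|}, gaussianPDFReal 0 1 x := by
    rw [gaussianReal_apply_eq_integral 0 one_ne_zero, ENNReal.toReal_ofReal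
      (setIntegral_nonneg hA fun x _ => gaussianPDFReal_nonneg 0 1 x)]
  have hta : (0:ℝ) < 1/(t+1) := by positivity
  have hDlow : (1/(t+1)) * (c₀ * Real.exp (-(3/2) - t^2/2))
      ≤ (gaussianReal 0 1 {x : ℝ | t < |x|}).toReal := by
    rw [hD]
    have hsub : Ioc t (t + 1/(t+1)) ⊆ {x : ℝ | t < |x|} := by
      intro x hx
      rcases hx with ⟨hx1, _⟩
      simp only [mem_setOf_eq]
      calc t < x := hx1
        _ ≤ |x| := le_abs_self x
    have step3 : (∫ x in Ioc t (t + 1/(t+1)), gaussianPDFReal 0 1 x)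
        ≤ ∫ x in {x : ℝ | t < |x|}, gaussianPDFReal 0 1 x := by
      apply setIntegral_mono_set (integrable_gaussianPDFReal 0 1).integrableOn
        (ae_of_all _ fun x => gaussianPDFReal_nonneg 0 1 x)
        (HasSubset.Subset.eventuallyLE hsub)
    refine le_trans ?_ step3
    have step1 : (∫ _x in Ioc t (t + 1/(t+1)), (c₀ * Real.exp (-(3/2) - t^2/2)))
        ≤ ∫ x in Ioc t (t + 1/(t+1)), gaussianPDFReal 0 1 x := by
      apply setIntegral_mono_on
        (integrableOn_const measure_Ioc_lt_top.ne)
        (integrable_gaussianPDFReal 0 1).integrableOn measurableSet_Ioc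
      intro x hx
      rcases hx with ⟨hx1, hx2⟩
      rw [hpdf]
      apply mul_le_mul_of_nonneg_left _ hc0pos.le
      apply Real.exp_le_exp.2
      have h6 : t * (1/(t+1)) ≤ 1 := by
        rw [mul_one_div, div_le_one (by linarith)]; linarith
      have h7 : (1/(t+1)) ≤ 1 := by
        rw [div_le_one (by linarith)]; linarith
      nlinarith
    refine le_trans (le_of_eq ?_) step1
    rw [setIntegral_const, Real.volume_real_Ioc, smul_eq_mul]
    rw [show t + 1/(t+1) - t = 1/(t+1) by ring, max_eq_left hta.le]
  have hDpos : 0 < (gaussianReal 0 1 {x : ℝ | t < |x|}).toReal :=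
    lt_of_lt_of_le (mul_pos hta (mul_pos hc0pos (Real.exp_pos _))) hDlow
  rw [h1, h4, inv_mul_le_iff₀ hDpos]
  have h12s : (0:ℝ) < 1 - 2 * s := by linarith
  have hRHS0 : 0 ≤ 12 * Real.exp 2 * (1 / (1 - 2 * s)) * Real.exp (s * t ^ 2) :=
    le_of_lt (mul_pos (mul_pos (mul_pos (by norm_num) (Real.exp_pos 2))
      (div_pos one_pos h12s)) (Real.exp_pos _))
  refine le_trans ?_ (mul_le_mul_of_nonneg_right hDlow hRHS0)
  rw [show (1/(t+1)) * (c₀ * Real.exp (-(3/2) - t^2/2))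
      * (12 * Real.exp 2 * (1 / (1 - 2 * s)) * Real.exp (s * t ^ 2))
    = c₀ * ((1/(t+1)) * Real.exp (-(3/2) - t^2/2)
      * (12 * Real.exp 2 * (1 / (1 - 2 * s)) * Real.exp (s * t ^ 2))) by ring]
  apply mul_le_mul_of_nonneg_left _ hc0pos.le
  -- core inequality
  have hre : (1/(t+1)) * Real.exp (-(3/2) - t^2/2)
      * (12 * Real.exp 2 * (1 / (1 - 2 * s)) * Real.exp (s * t ^ 2))
      = (6 * (Real.exp (1/2) * Real.exp (-(1/2-s)*t^2))) / ((t+1)*(1/2-s)) := by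
    rw [show Real.exp (1/2) * Real.exp (-(1/2-s)*t^2)
      = Real.exp (-(3/2) - t^2/2) * (Real.exp 2 * Real.exp (s*t^2)) by
        rw [← Real.exp_add, ← Real.exp_add, ← Real.exp_add]; congr 1; ring]
    have ht1 : t + 1 ≠ 0 := by linarith
    have hs1 : 1 - 2*s ≠ 0 := by linarith
    field_simp
    ring
  rw [hre]
  have hX : 0 < Real.exp (-(1/2-s)*t^2) := Real.exp_pos _
  have he1 : (1:ℝ) ≤ Real.exp (1/2) := Real.one_le_exp (by norm_num)
  rcases le_or_gt 1 t with h1t | h1t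
  · -- large t
    have hNb : N ≤ Real.exp (-(1/2-s)*t^2)/((1/2-s)*t) := tail_bound hk ht
    refine hNb.trans ?_
    rw [div_le_div_iff₀ (by positivity) (by positivity)]
    have key : (t+1) ≤ 6 * Real.exp (1/2) * t := by nlinarith
    nlinarith [key, mul_pos hX hk, mul_le_mul_of_nonneg_left key (mul_pos hX hk).le]
  · -- small t
    have hNb : N ≤ Real.sqrt (Real.pi/(1/2-s)) := by
      have h8 := setIntegral_le_integral (μ := volume) (s := {x : ℝ | t < |x|})
        (integrable_exp_neg_mul_sq hk) (ae_of_all _ fun x => (Real.exp_pos _).le)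
      rw [integral_gaussian] at h8
      exact h8
    refine hNb.trans ?_
    have h9 : (1:ℝ) ≤ Real.exp (1/2) * Real.exp (-(1/2-s)*t^2) := by
      rw [← Real.exp_add]
      apply Real.one_le_exp
      have ht2 : t^2 ≤ 1 := by nlinarith
      nlinarith [mul_le_mul_of_nonneg_left ht2 hk.le]
    have hsq : Real.sqrt (Real.pi/(1/2-s)) ≤ 3/(1/2-s) := by
      rw [show (3:ℝ)/(1/2-s) = Real.sqrt ((3/(1/2-s))^2) by
        rw [Real.sqrt_sq (by positivity)]]
      apply Real.sqrt_le_sqrt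
      rw [div_pow, div_le_div_iff₀ hk (by positivity)]
      nlinarith [Real.pi_le_four]
    refine hsq.trans ?_
    rw [div_le_div_iff₀ hk (by positivity)]
    nlinarith [mul_le_mul_of_nonneg_left h9 hk.le]
end
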